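/- arXiv:1005.1726 — 2 statements merged into one kernel-verified Lean document; each statement's English description precedes it below -/
import Mathlib

section
/- For the complete bipartite graphs K_{1,t} (the star) and K_{2,t} with t ≥ 1 the partition polynomial satisfies Q(K_{1,t}, x) = x·(1+x)^t and Q(K_{2,t}, x) = x·[(1+x)^t − x^t] + x^2·[(2+x)^t − x^t] + x^{2+t}. -/
open Finset

variable {V : Type*} [Fintype V] [DecidableEq V]

/-- `P` is a set partition of the vertex set `V`, given as a finset of (nonempty,
pairwise disjoint, covering) blocks. -/
def IsPartition (P : Finset (Finset V)) : Prop :=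
  ∅ ∉ P ∧ ∀ v : V, ∃! B : Finset V, B ∈ P ∧ v ∈ B

/-- `P` is a connected set partition of `G`: every block induces a connected subgraph. -/
def IsConnPartition (G : SimpleGraph V) (P : Finset (Finset V)) : Prop :=
  IsPartition P ∧ ∀ B ∈ P, (G.induce (B : Set V)).Connected

open scoped Classical in
/-- The finset of all connected set partitions (`Π_c(G)`). -/
noncomputable def connParts (G : SimpleGraph V) : Finset (Finset (Finset V)) :=
  Finset.univ.filter (IsConnPartition G)

open scoped Classical in
/-- The partition polynomial `Q(G,x) = Σ_{π ∈ Π_c(G)} x^{|π|}`, evaluated at `x : ℤ`. -/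
noncomputable def Q (G : SimpleGraph V) (x : ℤ) : ℤ :=
  ∑ P ∈ connParts G, x ^ P.card


set_option linter.unusedSectionVars false

lemma connected_of_hub {α : Type*} (G : SimpleGraph α) (h : α)
    (hr : ∀ v, G.Reachable h v) : G.Connected := by
  have : Nonempty α := ⟨h⟩
  exact SimpleGraph.Connected.mk fun u v => (hr u).symm.trans (hr v)

lemma not_connected_of_edgeless {α : Type*} {G : SimpleGraph α} {u v : α} (huv : u ≠ v)
    (h : ∀ a b, ¬ G.Adj a b) : ¬ G.Connected := by
  have hG : G = ⊥ := by ext a b; simp [h a b]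
  intro hc
  exact huv ((SimpleGraph.reachable_bot).mp (hG ▸ hc.preconnected u v))

lemma connected_induce_of_subsingleton (G : SimpleGraph V) (s : Set V) (hs : s.Subsingleton)
    (hne : s.Nonempty) : (G.induce s).Connected := by
  obtain ⟨v, hv⟩ := hne
  have : Nonempty s := ⟨⟨v, hv⟩⟩
  refine SimpleGraph.Connected.mk fun a b => ?_
  have : a = b := Subtype.ext (hs a.2 b.2)
  exact this ▸ SimpleGraph.Reachable.refl _

lemma block_eq {P : Finset (Finset V)} (hP : IsPartition P) {B C : Finset V} {v : V}
    (hB : B ∈ P) (hvB : v ∈ B) (hC : C ∈ P) (hvC : v ∈ C) : B = C := by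
  obtain ⟨D, _, hD⟩ := hP.2 v
  rw [hD B ⟨hB, hvB⟩, hD C ⟨hC, hvC⟩]

section CBG
variable {m t : ℕ}

/-- connected: block with a unique left vertex. -/
lemma conn_one_left (B : Finset (Fin m ⊕ Fin t)) (a : Fin m) (ha : Sum.inl a ∈ B)
    (hB : ∀ b : Fin m, Sum.inl b ∈ B → b = a) :
    ((completeBipartiteGraph (Fin m) (Fin t)).induce (B : Set _)).Connected := by
  refine connected_of_hub _ ⟨Sum.inl a, by simpa using ha⟩ ?_
  rintro ⟨v, hv⟩
  rcases v with b | j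
  · have : b = a := hB b (by simpa using hv)
    subst this; exact SimpleGraph.Reachable.refl _
  · exact SimpleGraph.Adj.reachable (Or.inl ⟨rfl, rfl⟩)

/-- connected: block containing `inl 0`, `inl 1` (as left), and some right vertex. -/
lemma conn_two_left (B : Finset (Fin 2 ⊕ Fin t)) (j : Fin t) (hj : Sum.inr j ∈ B)
    (h0 : Sum.inl 0 ∈ B) :
    ((completeBipartiteGraph (Fin 2) (Fin t)).induce (B : Set _)).Connected := by
  refine connected_of_hub _ ⟨Sum.inr j, by simpa using hj⟩ ?_
  rintro ⟨v, hv⟩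
  rcases v with b | k
  · exact SimpleGraph.Adj.reachable (Or.inr ⟨rfl, rfl⟩)
  · have r1 : ((completeBipartiteGraph (Fin 2) (Fin t)).induce (B : Set _)).Reachable
        ⟨Sum.inr j, by simpa using hj⟩ ⟨Sum.inl 0, by simpa using h0⟩ :=
      SimpleGraph.Adj.reachable (Or.inr ⟨rfl, rfl⟩)
    exact r1.trans (SimpleGraph.Adj.reachable (Or.inl ⟨rfl, rfl⟩))

/-- disconnected: two right vertices, no left vertex. -/
lemma not_conn_two_right (B : Finset (Fin m ⊕ Fin t)) (j k : Fin t) (hj : Sum.inr j ∈ B)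
    (hk : Sum.inr k ∈ B) (hjk : j ≠ k) (hnl : ∀ a : Fin m, Sum.inl a ∉ B) :
    ¬ ((completeBipartiteGraph (Fin m) (Fin t)).induce (B : Set _)).Connected := by
  refine not_connected_of_edgeless (u := ⟨Sum.inr j, by simpa using hj⟩)
    (v := ⟨Sum.inr k, by simpa using hk⟩) (by simp [Subtype.ext_iff, hjk]) ?_
  rintro ⟨a, haB⟩ ⟨b, hbB⟩
  rcases a with a | a
  · exact absurd (by simpa using haB) (hnl a)
  rcases b with b | b
  · exact absurd (by simpa using hbB) (hnl b)
  rintro (⟨h, -⟩ | ⟨-, h⟩) <;> exact Bool.false_ne_true h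

/-- disconnected: two left vertices, no right vertex. -/
lemma not_conn_two_left (B : Finset (Fin m ⊕ Fin t)) (a b : Fin m) (ha : Sum.inl a ∈ B)
    (hb : Sum.inl b ∈ B) (hab : a ≠ b) (hnr : ∀ j : Fin t, Sum.inr j ∉ B) :
    ¬ ((completeBipartiteGraph (Fin m) (Fin t)).induce (B : Set _)).Connected := by
  refine not_connected_of_edgeless (u := ⟨Sum.inl a, by simpa using ha⟩)
    (v := ⟨Sum.inl b, by simpa using hb⟩) (by simp [Subtype.ext_iff, hab]) ?_
  rintro ⟨c, hcB⟩ ⟨d, hdB⟩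
  rcases c with c | c
  · rcases d with d | d
    · rintro (⟨-, h⟩ | ⟨h, -⟩) <;> exact Bool.false_ne_true h
    · exact absurd (by simpa using hdB) (hnr d)
  · exact absurd (by simpa using hcB) (hnr c)

end CBG

lemma mem_connParts {G : SimpleGraph V} {P : Finset (Finset V)} :
    P ∈ connParts G ↔ IsConnPartition G P := by
  classical simp [connParts]

section K1

variable {m t : ℕ}

lemma block_shape {P : Finset (Finset (Fin m ⊕ Fin t))}
    (hP : IsConnPartition (completeBipartiteGraph (Fin m) (Fin t)) P)
    {B : Finset (Fin m ⊕ Fin t)} (hB : B ∈ P) (h : ∀ a : Fin m, Sum.inl a ∉ B) :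
    ∃ j, B = {Sum.inr j} := by
  have hne : B.Nonempty := by
    rcases B.eq_empty_or_nonempty with rfl | h
    · exact absurd hB hP.1.1
    · exact h
  obtain ⟨v, hv⟩ := hne
  rcases v with a | j
  · exact absurd hv (h a)
  refine ⟨j, ?_⟩
  ext w
  simp only [Finset.mem_singleton]
  constructor
  · intro hw
    rcases w with a | k
    · exact absurd hw (h a)
    by_contra hne
    have hjk : k ≠ j := fun e => hne (by rw [e])
    exact not_conn_two_right B k j hw hv hjk h (hP.2 B hB)
  · rintro rfl; exact hv

variable (t) in
def starBlock (S : Finset (Fin t)) : Finset (Fin 1 ⊕ Fin t) :=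
  insert (Sum.inl 0) (S.image Sum.inr)

variable (t) in
def phi1 (S : Finset (Fin t)) : Finset (Finset (Fin 1 ⊕ Fin t)) :=
  insert (starBlock t S)
    ((Finset.univ \ S).image fun j => ({Sum.inr j} : Finset (Fin 1 ⊕ Fin t)))

lemma inl_mem_starBlock (S : Finset (Fin t)) (i : Fin 1) : Sum.inl i ∈ starBlock t S := by
  have : i = 0 := Subsingleton.elim _ _
  subst this; simp [starBlock]

lemma inr_mem_starBlock {S : Finset (Fin t)} {j : Fin t} :
    Sum.inr j ∈ starBlock t S ↔ j ∈ S := by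
  simp [starBlock]

lemma phi1_isConn (S : Finset (Fin t)) :
    IsConnPartition (completeBipartiteGraph (Fin 1) (Fin t)) (phi1 t S) := by
  refine ⟨⟨?_, ?_⟩, ?_⟩
  · simp only [phi1, Finset.mem_insert, Finset.mem_image]
    push_neg
    refine ⟨?_, ?_⟩
    · intro h
      have := inl_mem_starBlock S 0
      rw [← h] at this
      simp at this
    · intro j _
      simp
  · intro v
    rcases v with i | j
    · refine ⟨starBlock t S, ⟨by simp [phi1], inl_mem_starBlock S i⟩, ?_⟩
      rintro B ⟨hB, hiB⟩
      simp only [phi1, Finset.mem_insert, Finset.mem_image] at hB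
      rcases hB with rfl | ⟨k, _, rfl⟩
      · rfl
      · simp at hiB
    · by_cases hj : j ∈ S
      · refine ⟨starBlock t S, ⟨by simp [phi1], inr_mem_starBlock.mpr hj⟩, ?_⟩
        rintro B ⟨hB, hjB⟩
        simp only [phi1, Finset.mem_insert, Finset.mem_image] at hB
        rcases hB with rfl | ⟨k, hk, rfl⟩
        · rfl
        · simp only [Finset.mem_singleton, Sum.inr.injEq] at hjB
          subst hjB
          exact absurd hj (by simpa using (Finset.mem_sdiff.mp hk).2)
      · refine ⟨{Sum.inr j}, ⟨?_, by simp⟩, ?_⟩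
        · simp only [phi1, Finset.mem_insert, Finset.mem_image]
          exact Or.inr ⟨j, by simpa using hj, rfl⟩
        rintro B ⟨hB, hjB⟩
        simp only [phi1, Finset.mem_insert, Finset.mem_image] at hB
        rcases hB with rfl | ⟨k, _, rfl⟩
        · exact absurd (inr_mem_starBlock.mp hjB) hj
        · simp only [Finset.mem_singleton, Sum.inr.injEq] at hjB
          subst hjB; rfl
  · intro B hB
    simp only [phi1, Finset.mem_insert, Finset.mem_image] at hB
    rcases hB with rfl | ⟨k, _, rfl⟩
    · refine conn_one_left _ 0 (inl_mem_starBlock S 0) fun b _ => Subsingleton.elim _ _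
    · exact connected_induce_of_subsingleton _ _ (by simp) (by simp)

lemma phi1_injective : Function.Injective (phi1 t) := by
  intro S S' h
  have h1 : starBlock t S ∈ phi1 t S' := h ▸ (by simp [phi1])
  have h2 : starBlock t S = starBlock t S' := by
    simp only [phi1, Finset.mem_insert, Finset.mem_image] at h1
    rcases h1 with h1 | ⟨k, _, h1⟩
    · exact h1
    · exfalso
      have := inl_mem_starBlock S 0
      rw [← h1] at this
      simp at this
  ext j
  rw [← inr_mem_starBlock (S := S), h2, inr_mem_starBlock]

lemma card_phi1 (S : Finset (Fin t)) : (phi1 t S).card = 1 + (t - S.card) := by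
  rw [phi1, Finset.card_insert_of_notMem, Finset.card_image_of_injective _
      (fun a b hab => Sum.inr_injective (Finset.singleton_injective hab))]
  · rw [Finset.card_sdiff_of_subset (Finset.subset_univ S), Finset.card_univ, Fintype.card_fin]
    omega
  · simp only [Finset.mem_image]
    rintro ⟨k, _, hk⟩
    have := inl_mem_starBlock S 0
    rw [← hk] at this
    simp at this

lemma connParts_K1 :
    connParts (completeBipartiteGraph (Fin 1) (Fin t)) = Finset.univ.image (phi1 t) := by
  ext P
  rw [mem_connParts]
  constructor
  · intro hP
    obtain ⟨B0, ⟨hB0P, hB0m⟩, _⟩ := hP.1.2 (Sum.inl 0)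
    set S : Finset (Fin t) := Finset.univ.filter (fun j => Sum.inr j ∈ B0) with hS
    have hB0 : B0 = starBlock t S := by
      ext v
      rcases v with i | j
      · have : i = 0 := Subsingleton.elim _ _
        subst this
        simp [hB0m, inl_mem_starBlock]
      · simp [inr_mem_starBlock, hS]
    simp only [Finset.mem_image, Finset.mem_univ, true_and]
    refine ⟨S, ?_⟩
    symm
    ext B
    simp only [phi1, Finset.mem_insert, Finset.mem_image]
    constructor
    · intro hBP
      by_cases hB : B = B0
      · exact Or.inl (hB.trans hB0)
      refine Or.inr ?_
      have hnl : ∀ a : Fin 1, Sum.inl a ∉ B := by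
        intro a haB
        have : a = 0 := Subsingleton.elim _ _
        subst this
        exact hB (block_eq hP.1 hBP haB hB0P hB0m)
      obtain ⟨j, rfl⟩ := block_shape hP hBP hnl
      refine ⟨j, ?_, rfl⟩
      simp only [Finset.mem_sdiff, Finset.mem_univ, true_and, hS, Finset.mem_filter]
      intro hjB0
      exact hB (block_eq hP.1 hBP (by simp) hB0P hjB0)
    · rintro (rfl | ⟨j, hj, rfl⟩)
      · exact hB0 ▸ hB0P
      · have hjS : j ∉ S := by simpa using (Finset.mem_sdiff.mp hj).2
        obtain ⟨C, ⟨hCP, hjC⟩, _⟩ := hP.1.2 (Sum.inr j)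
        have hnl : ∀ a : Fin 1, Sum.inl a ∉ C := by
          intro a haC
          have : a = 0 := Subsingleton.elim _ _
          subst this
          have : C = B0 := block_eq hP.1 hCP haC hB0P hB0m
          subst this
          exact hjS (by simpa [hS] using hjC)
        obtain ⟨k, rfl⟩ := block_shape hP hCP hnl
        have : j = k := by simpa using hjC
        subst this
        exact hCP
  · rintro hP
    simp only [Finset.mem_image, Finset.mem_univ, true_and] at hP
    obtain ⟨S, rfl⟩ := hP
    exact phi1_isConn S

lemma sum_pow_compl (t : ℕ) (x : ℤ) :
    ∑ S : Finset (Fin t), x ^ (t - S.card) = (1 + x) ^ t := by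
  have h := Fintype.prod_add (fun _ : Fin t => (1 : ℤ)) (fun _ => x)
  simp only [Finset.prod_const, one_pow, one_mul, Finset.card_compl, Fintype.card_fin,
    Finset.card_univ] at h
  rw [← h]

lemma Q_K1 (t : ℕ) (x : ℤ) :
    Q (completeBipartiteGraph (Fin 1) (Fin t)) x = x * (1 + x) ^ t := by
  classical
  rw [Q, connParts_K1, Finset.sum_image (fun a _ b _ h => phi1_injective h)]
  have : ∀ S : Finset (Fin t), x ^ (phi1 t S).card = x * x ^ (t - S.card) := by
    intro S
    rw [card_phi1, pow_add, pow_one]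
  rw [Finset.sum_congr rfl fun S _ => this S, ← Finset.mul_sum, sum_pow_compl]

end K1

section K2

variable {t : ℕ}

variable (t) in
def mergedBlock (S : Finset (Fin t)) : Finset (Fin 2 ⊕ Fin t) :=
  insert (Sum.inl 0) (insert (Sum.inl 1) (S.image Sum.inr))

variable (t) in
def psiA (S : Finset (Fin t)) : Finset (Finset (Fin 2 ⊕ Fin t)) :=
  insert (mergedBlock t S)
    ((Finset.univ \ S).image fun j => ({Sum.inr j} : Finset (Fin 2 ⊕ Fin t)))

variable (t) in
def aBlock (f : Fin t → Fin 3) : Finset (Fin 2 ⊕ Fin t) :=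
  insert (Sum.inl 0) ((Finset.univ.filter fun j => f j = 0).image Sum.inr)

variable (t) in
def bBlock (f : Fin t → Fin 3) : Finset (Fin 2 ⊕ Fin t) :=
  insert (Sum.inl 1) ((Finset.univ.filter fun j => f j = 1).image Sum.inr)

variable (t) in
def psiB (f : Fin t → Fin 3) : Finset (Finset (Fin 2 ⊕ Fin t)) :=
  insert (aBlock t f) (insert (bBlock t f)
    ((Finset.univ.filter fun j => f j = 2).image fun j => ({Sum.inr j} : Finset (Fin 2 ⊕ Fin t))))

lemma inl_mem_mergedBlock (S : Finset (Fin t)) (i : Fin 2) : Sum.inl i ∈ mergedBlock t S := by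
  fin_cases i <;> simp [mergedBlock]

lemma inr_mem_mergedBlock {S : Finset (Fin t)} {j : Fin t} :
    Sum.inr j ∈ mergedBlock t S ↔ j ∈ S := by
  simp [mergedBlock]

lemma inl_mem_aBlock {f : Fin t → Fin 3} {i : Fin 2} : Sum.inl i ∈ aBlock t f ↔ i = 0 := by
  simp [aBlock]

lemma inr_mem_aBlock {f : Fin t → Fin 3} {j : Fin t} : Sum.inr j ∈ aBlock t f ↔ f j = 0 := by
  simp [aBlock]

lemma inl_mem_bBlock {f : Fin t → Fin 3} {i : Fin 2} : Sum.inl i ∈ bBlock t f ↔ i = 1 := by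
  simp [bBlock]

lemma inr_mem_bBlock {f : Fin t → Fin 3} {j : Fin t} : Sum.inr j ∈ bBlock t f ↔ f j = 1 := by
  simp [bBlock]

lemma mem_psiA_iff {S : Finset (Fin t)} {B : Finset (Fin 2 ⊕ Fin t)} :
    B ∈ psiA t S ↔ B = mergedBlock t S ∨ ∃ j, j ∉ S ∧ B = {Sum.inr j} := by
  simp only [psiA, Finset.mem_insert, Finset.mem_image, Finset.mem_sdiff, Finset.mem_univ,
    true_and]
  exact or_congr Iff.rfl
    ⟨fun ⟨j, hj, e⟩ => ⟨j, hj, e.symm⟩, fun ⟨j, hj, e⟩ => ⟨j, hj, e.symm⟩⟩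

lemma mem_psiB_iff {f : Fin t → Fin 3} {B : Finset (Fin 2 ⊕ Fin t)} :
    B ∈ psiB t f ↔ B = aBlock t f ∨ B = bBlock t f ∨ ∃ j, f j = 2 ∧ B = {Sum.inr j} := by
  simp only [psiB, Finset.mem_insert, Finset.mem_image, Finset.mem_filter, Finset.mem_univ,
    true_and]
  refine or_congr Iff.rfl (or_congr Iff.rfl
    ⟨fun ⟨j, hj, e⟩ => ⟨j, hj, e.symm⟩, fun ⟨j, hj, e⟩ => ⟨j, hj, e.symm⟩⟩)

lemma psiA_isConn {S : Finset (Fin t)} (hS : S.Nonempty) :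
    IsConnPartition (completeBipartiteGraph (Fin 2) (Fin t)) (psiA t S) := by
  refine ⟨⟨?_, ?_⟩, ?_⟩
  · rw [mem_psiA_iff]
    push_neg
    constructor
    · intro h
      have := inl_mem_mergedBlock S 0
      rw [← h] at this
      simp at this
    · intro j _
      intro h
      exact absurd (h ▸ (Finset.singleton_nonempty _)) (by simp)
  · intro v
    rcases v with i | j
    · refine ⟨mergedBlock t S, ⟨by rw [mem_psiA_iff]; exact Or.inl rfl,
        inl_mem_mergedBlock S i⟩, ?_⟩
      rintro B ⟨hB, hiB⟩
      rw [mem_psiA_iff] at hB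
      rcases hB with rfl | ⟨k, _, rfl⟩
      · rfl
      · simp at hiB
    · by_cases hj : j ∈ S
      · refine ⟨mergedBlock t S, ⟨by rw [mem_psiA_iff]; exact Or.inl rfl,
          inr_mem_mergedBlock.mpr hj⟩, ?_⟩
        rintro B ⟨hB, hjB⟩
        rw [mem_psiA_iff] at hB
        rcases hB with rfl | ⟨k, hk, rfl⟩
        · rfl
        · simp only [Finset.mem_singleton, Sum.inr.injEq] at hjB
          subst hjB
          exact absurd hj hk
      · refine ⟨{Sum.inr j}, ⟨by rw [mem_psiA_iff]; exact Or.inr ⟨j, hj, rfl⟩, by simp⟩, ?_⟩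
        rintro B ⟨hB, hjB⟩
        rw [mem_psiA_iff] at hB
        rcases hB with rfl | ⟨k, _, rfl⟩
        · exact absurd (inr_mem_mergedBlock.mp hjB) hj
        · simp only [Finset.mem_singleton, Sum.inr.injEq] at hjB
          subst hjB; rfl
  · intro B hB
    rw [mem_psiA_iff] at hB
    rcases hB with rfl | ⟨k, _, rfl⟩
    · obtain ⟨j0, hj0⟩ := hS
      exact conn_two_left _ j0 (inr_mem_mergedBlock.mpr hj0) (inl_mem_mergedBlock S 0)
    · exact connected_induce_of_subsingleton _ _ (by simp) (by simp)

lemma psiB_isConn (f : Fin t → Fin 3) :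
    IsConnPartition (completeBipartiteGraph (Fin 2) (Fin t)) (psiB t f) := by
  refine ⟨⟨?_, ?_⟩, ?_⟩
  · rw [mem_psiB_iff]
    push_neg
    refine ⟨?_, ?_, ?_⟩
    · intro h
      have : Sum.inl (0 : Fin 2) ∈ aBlock t f := inl_mem_aBlock.mpr rfl
      rw [← h] at this; simp at this
    · intro h
      have : Sum.inl (1 : Fin 2) ∈ bBlock t f := inl_mem_bBlock.mpr rfl
      rw [← h] at this; simp at this
    · intro j _ h
      exact absurd (h ▸ (Finset.singleton_nonempty _)) (by simp)
  · intro v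
    rcases v with i | j
    · fin_cases i
      · refine ⟨aBlock t f, ⟨by rw [mem_psiB_iff]; exact Or.inl rfl, inl_mem_aBlock.mpr rfl⟩, ?_⟩
        rintro B ⟨hB, hiB⟩
        rw [mem_psiB_iff] at hB
        rcases hB with rfl | rfl | ⟨k, _, rfl⟩
        · rfl
        · exact absurd (inl_mem_bBlock.mp hiB) (by decide)
        · simp at hiB
      · refine ⟨bBlock t f, ⟨by rw [mem_psiB_iff]; exact Or.inr (Or.inl rfl),
          inl_mem_bBlock.mpr rfl⟩, ?_⟩
        rintro B ⟨hB, hiB⟩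
        rw [mem_psiB_iff] at hB
        rcases hB with rfl | rfl | ⟨k, _, rfl⟩
        · exact absurd (inl_mem_aBlock.mp hiB) (by decide)
        · rfl
        · simp at hiB
    · have h3 : f j = 0 ∨ f j = 1 ∨ f j = 2 := by
        have : ∀ y : Fin 3, y = 0 ∨ y = 1 ∨ y = 2 := by decide
        exact this (f j)
      rcases h3 with h3 | h3 | h3
      · refine ⟨aBlock t f, ⟨by rw [mem_psiB_iff]; exact Or.inl rfl,
          inr_mem_aBlock.mpr h3⟩, ?_⟩
        rintro B ⟨hB, hjB⟩
        rw [mem_psiB_iff] at hB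
        rcases hB with rfl | rfl | ⟨k, hk, rfl⟩
        · rfl
        · exfalso
          have := inr_mem_bBlock.mp hjB
          rw [h3] at this
          exact absurd this (by decide)
        · exfalso
          simp only [Finset.mem_singleton, Sum.inr.injEq] at hjB
          subst hjB
          rw [h3] at hk
          exact absurd hk (by decide)
      · refine ⟨bBlock t f, ⟨by rw [mem_psiB_iff]; exact Or.inr (Or.inl rfl),
          inr_mem_bBlock.mpr h3⟩, ?_⟩
        rintro B ⟨hB, hjB⟩
        rw [mem_psiB_iff] at hB
        rcases hB with rfl | rfl | ⟨k, hk, rfl⟩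
        · exfalso
          have := inr_mem_aBlock.mp hjB
          rw [h3] at this
          exact absurd this (by decide)
        · rfl
        · exfalso
          simp only [Finset.mem_singleton, Sum.inr.injEq] at hjB
          subst hjB
          rw [h3] at hk
          exact absurd hk (by decide)
      · refine ⟨{Sum.inr j}, ⟨by rw [mem_psiB_iff]; exact Or.inr (Or.inr ⟨j, h3, rfl⟩),
          by simp⟩, ?_⟩
        rintro B ⟨hB, hjB⟩
        rw [mem_psiB_iff] at hB
        rcases hB with rfl | rfl | ⟨k, hk, rfl⟩
        · exfalso
          have := inr_mem_aBlock.mp hjB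
          rw [h3] at this
          exact absurd this (by decide)
        · exfalso
          have := inr_mem_bBlock.mp hjB
          rw [h3] at this
          exact absurd this (by decide)
        · simp only [Finset.mem_singleton, Sum.inr.injEq] at hjB
          subst hjB; rfl
  · intro B hB
    rw [mem_psiB_iff] at hB
    rcases hB with rfl | rfl | ⟨k, _, rfl⟩
    · exact conn_one_left _ 0 (inl_mem_aBlock.mpr rfl) fun b hb => inl_mem_aBlock.mp hb
    · exact conn_one_left _ 1 (inl_mem_bBlock.mpr rfl) fun b hb => inl_mem_bBlock.mp hb
    · exact connected_induce_of_subsingleton _ _ (by simp) (by simp)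

end K2

section K2b

variable {t : ℕ}

lemma connParts_K2 :
    connParts (completeBipartiteGraph (Fin 2) (Fin t)) =
      ((Finset.univ.filter Finset.Nonempty).image (psiA t)) ∪
        (Finset.univ.image (psiB t)) := by
  classical
  ext P
  rw [mem_connParts, Finset.mem_union]
  constructor
  · intro hP
    obtain ⟨B0, ⟨hB0P, hB0m⟩, _⟩ := hP.1.2 (Sum.inl 0)
    obtain ⟨B1, ⟨hB1P, hB1m⟩, _⟩ := hP.1.2 (Sum.inl 1)
    by_cases hB01 : B0 = B1
    · left
      subst hB01
      set S : Finset (Fin t) := Finset.univ.filter (fun j => Sum.inr j ∈ B0) with hS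
      have hSmem : ∀ j, Sum.inr j ∈ B0 ↔ j ∈ S := by intro j; simp [hS]
      have hSne : S.Nonempty := by
        rw [Finset.nonempty_iff_ne_empty]
        intro h
        refine not_conn_two_left B0 0 1 hB0m hB1m (by decide) ?_ (hP.2 B0 hB0P)
        intro j hj
        have : j ∈ S := (hSmem j).1 hj
        simp [h] at this
      have hB0 : B0 = mergedBlock t S := by
        ext v
        rcases v with i | j
        · constructor
          · intro _; exact inl_mem_mergedBlock S i
          · intro _
            fin_cases i
            exacts [hB0m, hB1m]
        · rw [inr_mem_mergedBlock, hSmem]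
      simp only [Finset.mem_image, Finset.mem_filter, Finset.mem_univ, true_and]
      refine ⟨S, hSne, ?_⟩
      symm
      ext B
      rw [mem_psiA_iff]
      constructor
      · intro hBP
        by_cases hB : B = B0
        · exact Or.inl (hB.trans hB0)
        refine Or.inr ?_
        have hnl : ∀ a : Fin 2, Sum.inl a ∉ B := by
          intro a haB
          fin_cases a
          · exact hB (block_eq hP.1 hBP haB hB0P hB0m)
          · exact hB (block_eq hP.1 hBP haB hB0P hB1m)
        obtain ⟨j, rfl⟩ := block_shape hP hBP hnl
        refine ⟨j, ?_, rfl⟩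
        intro hjS
        exact hB (block_eq hP.1 hBP (by simp) hB0P ((hSmem j).2 hjS))
      · rintro (rfl | ⟨j, hj, rfl⟩)
        · exact hB0 ▸ hB0P
        · obtain ⟨C, ⟨hCP, hjC⟩, _⟩ := hP.1.2 (Sum.inr j)
          have hnl : ∀ a : Fin 2, Sum.inl a ∉ C := by
            intro a haC
            have hCB0 : C = B0 := by
              fin_cases a
              · exact block_eq hP.1 hCP haC hB0P hB0m
              · exact block_eq hP.1 hCP haC hB0P hB1m
            exact hj ((hSmem j).1 (hCB0 ▸ hjC))
          obtain ⟨k, rfl⟩ := block_shape hP hCP hnl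
          have : j = k := by simpa using hjC
          subst this
          exact hCP
    · right
      set f : Fin t → Fin 3 := fun j =>
        if Sum.inr j ∈ B0 then 0 else if Sum.inr j ∈ B1 then 1 else 2 with hf
      have hdisj : ∀ j, Sum.inr j ∈ B0 → Sum.inr j ∈ B1 → False := by
        intro j h0 h1
        exact hB01 (block_eq hP.1 hB0P h0 hB1P h1)
      have hf0 : ∀ j, f j = 0 ↔ Sum.inr j ∈ B0 := by
        intro j
        simp only [hf]
        split_ifs with h h'
        · exact iff_of_true rfl h
        · exact iff_of_false (by decide) h
        · exact iff_of_false (by decide) h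
      have hf1 : ∀ j, f j = 1 ↔ Sum.inr j ∈ B1 := by
        intro j
        simp only [hf]
        split_ifs with h h'
        · exact iff_of_false (by decide) (fun h1 => hdisj j h h1)
        · exact iff_of_true rfl h'
        · exact iff_of_false (by decide) h'
      have hf2 : ∀ j, f j = 2 ↔ (Sum.inr j ∉ B0 ∧ Sum.inr j ∉ B1) := by
        intro j
        simp only [hf]
        split_ifs with h h'
        · exact iff_of_false (by decide) (fun hc => hc.1 h)
        · exact iff_of_false (by decide) (fun hc => hc.2 h')
        · exact iff_of_true rfl ⟨h, h'⟩
      have hinl1B0 : Sum.inl 1 ∉ B0 := fun hc => hB01 (block_eq hP.1 hB0P hc hB1P hB1m)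
      have hinl0B1 : Sum.inl 0 ∉ B1 := fun hc => hB01 (block_eq hP.1 hB0P hB0m hB1P hc)
      have hB0eq : B0 = aBlock t f := by
        ext v
        rcases v with i | j
        · fin_cases i
          · exact iff_of_true hB0m (inl_mem_aBlock.mpr rfl)
          · exact iff_of_false hinl1B0 (fun hc => absurd (inl_mem_aBlock.mp hc) (by decide))
        · rw [inr_mem_aBlock, hf0]
      have hB1eq : B1 = bBlock t f := by
        ext v
        rcases v with i | j
        · fin_cases i
          · exact iff_of_false hinl0B1 (fun hc => absurd (inl_mem_bBlock.mp hc) (by decide))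
          · exact iff_of_true hB1m (inl_mem_bBlock.mpr rfl)
        · rw [inr_mem_bBlock, hf1]
      simp only [Finset.mem_image, Finset.mem_univ, true_and]
      refine ⟨f, ?_⟩
      symm
      ext B
      rw [mem_psiB_iff]
      constructor
      · intro hBP
        by_cases hB : B = B0
        · exact Or.inl (hB.trans hB0eq)
        by_cases hB' : B = B1
        · exact Or.inr (Or.inl (hB'.trans hB1eq))
        refine Or.inr (Or.inr ?_)
        have hnl : ∀ a : Fin 2, Sum.inl a ∉ B := by
          intro a haB
          fin_cases a
          · exact hB (block_eq hP.1 hBP haB hB0P hB0m)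
          · exact hB' (block_eq hP.1 hBP haB hB1P hB1m)
        obtain ⟨j, rfl⟩ := block_shape hP hBP hnl
        refine ⟨j, ?_, rfl⟩
        rw [hf2]
        constructor
        · intro hc; exact hB (block_eq hP.1 hBP (by simp) hB0P hc)
        · intro hc; exact hB' (block_eq hP.1 hBP (by simp) hB1P hc)
      · rintro (rfl | rfl | ⟨j, hfj, rfl⟩)
        · exact hB0eq ▸ hB0P
        · exact hB1eq ▸ hB1P
        · obtain ⟨C, ⟨hCP, hjC⟩, _⟩ := hP.1.2 (Sum.inr j)
          rw [hf2] at hfj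
          have hnl : ∀ a : Fin 2, Sum.inl a ∉ C := by
            intro a haC
            fin_cases a
            · exact hfj.1 ((block_eq hP.1 hCP haC hB0P hB0m) ▸ hjC)
            · exact hfj.2 ((block_eq hP.1 hCP haC hB1P hB1m) ▸ hjC)
          obtain ⟨k, rfl⟩ := block_shape hP hCP hnl
          have : j = k := by simpa using hjC
          subst this
          exact hCP
  · rintro (h | h)
    · simp only [Finset.mem_image, Finset.mem_filter, Finset.mem_univ, true_and] at h
      obtain ⟨S, hS, rfl⟩ := h
      exact psiA_isConn hS
    · simp only [Finset.mem_image, Finset.mem_univ, true_and] at h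
      obtain ⟨f, rfl⟩ := h
      exact psiB_isConn f

lemma psiA_injective : Function.Injective (psiA t) := by
  intro S S' h
  have h1 : mergedBlock t S ∈ psiA t S' := h ▸ (mem_psiA_iff.mpr (Or.inl rfl))
  rw [mem_psiA_iff] at h1
  have h2 : mergedBlock t S = mergedBlock t S' := by
    rcases h1 with h1 | ⟨k, _, h1⟩
    · exact h1
    · exfalso
      have := inl_mem_mergedBlock S 0
      rw [h1] at this
      simp at this
  ext j
  rw [← inr_mem_mergedBlock (S := S), h2, inr_mem_mergedBlock]

lemma psiB_injective : Function.Injective (psiB t) := by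
  intro f g h
  have ha : aBlock t f = aBlock t g := by
    have h1 : aBlock t f ∈ psiB t g := h ▸ (mem_psiB_iff.mpr (Or.inl rfl))
    rw [mem_psiB_iff] at h1
    rcases h1 with h1 | h1 | ⟨k, _, h1⟩
    · exact h1
    · exfalso
      have : Sum.inl (0 : Fin 2) ∈ aBlock t f := inl_mem_aBlock.mpr rfl
      rw [h1] at this
      exact absurd (inl_mem_bBlock.mp this) (by decide)
    · exfalso
      have : Sum.inl (0 : Fin 2) ∈ aBlock t f := inl_mem_aBlock.mpr rfl
      rw [h1] at this
      simp at this
  have hb : bBlock t f = bBlock t g := by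
    have h1 : bBlock t f ∈ psiB t g := h ▸ (mem_psiB_iff.mpr (Or.inr (Or.inl rfl)))
    rw [mem_psiB_iff] at h1
    rcases h1 with h1 | h1 | ⟨k, _, h1⟩
    · exfalso
      have : Sum.inl (1 : Fin 2) ∈ bBlock t f := inl_mem_bBlock.mpr rfl
      rw [h1] at this
      exact absurd (inl_mem_aBlock.mp this) (by decide)
    · exact h1
    · exfalso
      have : Sum.inl (1 : Fin 2) ∈ bBlock t f := inl_mem_bBlock.mpr rfl
      rw [h1] at this
      simp at this
  funext j
  have h0 : f j = 0 ↔ g j = 0 := by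
    rw [← inr_mem_aBlock (f := f), ha, inr_mem_aBlock]
  have h1 : f j = 1 ↔ g j = 1 := by
    rw [← inr_mem_bBlock (f := f), hb, inr_mem_bBlock]
  have key : ∀ y z : Fin 3, (y = 0 ↔ z = 0) → (y = 1 ↔ z = 1) → y = z := by decide
  exact key _ _ h0 h1

lemma card_psiA (S : Finset (Fin t)) : (psiA t S).card = 1 + (t - S.card) := by
  rw [psiA, Finset.card_insert_of_notMem, Finset.card_image_of_injective _
      (fun a b hab => Sum.inr_injective (Finset.singleton_injective hab))]
  · rw [Finset.card_sdiff_of_subset (Finset.subset_univ S), Finset.card_univ, Fintype.card_fin]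
    omega
  · simp only [Finset.mem_image]
    rintro ⟨k, _, hk⟩
    have := inl_mem_mergedBlock S 0
    rw [← hk] at this
    simp at this

lemma card_psiB (f : Fin t → Fin 3) :
    (psiB t f).card = 2 + (Finset.univ.filter fun j => f j = 2).card := by
  rw [psiB, Finset.card_insert_of_notMem, Finset.card_insert_of_notMem,
    Finset.card_image_of_injective _
      (fun a b hab => Sum.inr_injective (Finset.singleton_injective hab))]
  · omega
  · simp only [Finset.mem_image]
    rintro ⟨k, _, hk⟩
    have : Sum.inl (1 : Fin 2) ∈ bBlock t f := inl_mem_bBlock.mpr rfl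
    rw [← hk] at this
    simp at this
  · simp only [Finset.mem_insert, Finset.mem_image]
    push_neg
    constructor
    · intro hc
      have : Sum.inl (0 : Fin 2) ∈ aBlock t f := inl_mem_aBlock.mpr rfl
      rw [hc] at this
      exact absurd (inl_mem_bBlock.mp this) (by decide)
    · intro k _ hk
      have : Sum.inl (0 : Fin 2) ∈ aBlock t f := inl_mem_aBlock.mpr rfl
      rw [← hk] at this
      simp at this

lemma psi_disjoint :
    Disjoint ((Finset.univ.filter Finset.Nonempty).image (psiA t))
      (Finset.univ.image (psiB t)) := by
  rw [Finset.disjoint_left]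
  rintro P hPA hPB
  simp only [Finset.mem_image, Finset.mem_filter, Finset.mem_univ, true_and] at hPA hPB
  obtain ⟨S, hS, rfl⟩ := hPA
  obtain ⟨f, hfe⟩ := hPB
  have h1 : mergedBlock t S ∈ psiB t f := by
    rw [hfe]
    exact mem_psiA_iff.mpr (Or.inl rfl)
  rw [mem_psiB_iff] at h1
  rcases h1 with h1 | h1 | ⟨k, _, h1⟩
  · have := inl_mem_mergedBlock S 1
    rw [h1] at this
    exact absurd (inl_mem_aBlock.mp this) (by decide)
  · have := inl_mem_mergedBlock S 0
    rw [h1] at this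
    exact absurd (inl_mem_bBlock.mp this) (by decide)
  · have := inl_mem_mergedBlock S 0
    rw [h1] at this
    simp at this

lemma sum_fiber2 (t : ℕ) (x : ℤ) :
    ∑ f : Fin t → Fin 3, x ^ (Finset.univ.filter fun j => f j = 2).card = (2 + x) ^ t := by
  classical
  have h := Fintype.prod_sum (κ := fun _ : Fin t => Fin 3)
    (fun _ j => if j = 2 then x else (1 : ℤ))
  have hL : ∏ _i : Fin t, (∑ j : Fin 3, if j = 2 then x else (1 : ℤ)) = (2 + x) ^ t := by
    rw [Finset.prod_const, Finset.card_univ, Fintype.card_fin]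
    congr 1
    rw [Fin.sum_univ_three, if_neg (by decide), if_neg (by decide), if_pos rfl]
    ring
  have hR : ∀ f : Fin t → Fin 3,
      (∏ i : Fin t, if f i = 2 then x else (1 : ℤ))
        = x ^ (Finset.univ.filter fun j => f j = 2).card := by
    intro f
    rw [Finset.prod_ite, Finset.prod_const, Finset.prod_const, one_pow, mul_one]
  rw [← hL, h]
  exact Finset.sum_congr rfl fun f _ => (hR f).symm

lemma Q_K2 (t : ℕ) (x : ℤ) :
    Q (completeBipartiteGraph (Fin 2) (Fin t)) x
      = (x * (1 + x) ^ t - x ^ (1 + t)) + x ^ 2 * (2 + x) ^ t := by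
  classical
  rw [Q, connParts_K2, Finset.sum_union psi_disjoint,
    Finset.sum_image (fun a _ b _ h => psiA_injective h),
    Finset.sum_image (fun a _ b _ h => psiB_injective h)]
  have hA : ∑ S ∈ Finset.univ.filter Finset.Nonempty, x ^ (psiA t S).card
      = x * (1 + x) ^ t - x ^ (1 + t) := by
    have hsplit := Finset.sum_filter_add_sum_filter_not Finset.univ Finset.Nonempty
      (fun S : Finset (Fin t) => x ^ (psiA t S).card)
    have hnot : Finset.univ.filter (fun S : Finset (Fin t) => ¬ S.Nonempty) = {∅} := by
      ext S
      simp [Finset.not_nonempty_iff_eq_empty]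
    rw [hnot, Finset.sum_singleton] at hsplit
    have huniv : ∑ S : Finset (Fin t), x ^ (psiA t S).card = x * (1 + x) ^ t := by
      have : ∀ S : Finset (Fin t), x ^ (psiA t S).card = x * x ^ (t - S.card) := by
        intro S
        rw [card_psiA, pow_add, pow_one]
      rw [Finset.sum_congr rfl fun S _ => this S, ← Finset.mul_sum, sum_pow_compl]
    have hempty : x ^ (psiA t (∅ : Finset (Fin t))).card = x ^ (1 + t) := by
      rw [card_psiA]
      simp
    rw [hempty] at hsplit
    rw [← huniv, ← hsplit]
    ring
  have hB : ∑ f : Fin t → Fin 3, x ^ (psiB t f).card = x ^ 2 * (2 + x) ^ t := by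
    have : ∀ f : Fin t → Fin 3, x ^ (psiB t f).card
        = x ^ 2 * x ^ (Finset.univ.filter fun j => f j = 2).card := by
      intro f
      rw [card_psiB, pow_add]
    rw [Finset.sum_congr rfl fun f _ => this f, ← Finset.mul_sum, sum_fiber2]
  rw [hA, hB]

end K2b

/-- The partition polynomials of the stars `K_{1,t}` and of `K_{2,t}` for `t ≥ 1`. -/
theorem completeBipartite_one_two (t : ℕ) (ht : 1 ≤ t) (x : ℤ) :
    Q (completeBipartiteGraph (Fin 1) (Fin t)) x = x * (1 + x) ^ t ∧
    Q (completeBipartiteGraph (Fin 2) (Fin t)) x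
      = x * ((1 + x) ^ t - x ^ t) + x ^ 2 * ((2 + x) ^ t - x ^ t) + x ^ (2 + t) := by
  refine ⟨Q_K1 t x, ?_⟩
  rw [Q_K2 t x, pow_add, pow_add, pow_one]
  ring
end

section
/- Let G = (V,E) be a finite simple graph and s(G) = (G^1, G^2, X) a splitting of G. Then for all set partitions β, γ of X: x^{|β|} · T(G, β, γ; x) = Σ_{(γ^1, γ^2): γ^1 ∨ γ^2 = γ} T(G^1, β, γ^1; x) · T(G^2, β, γ^2; x), where the sum is over all pairs of set partitions γ^1, γ^2 of X whose join in the partition lattice of X equals γ. -/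
open Finset

variable {V : Type*} [Fintype V] [DecidableEq V]

/-- `P` is a set partition of the finset `U`, given as a finset of (nonempty,
pairwise disjoint, covering) blocks contained in `U`. -/
def IsPartitionOn (U : Finset V) (P : Finset (Finset V)) : Prop :=
  ∅ ∉ P ∧ (∀ B ∈ P, B ⊆ U) ∧ ∀ v ∈ U, ∃! B : Finset V, B ∈ P ∧ v ∈ B

/-- Refinement order on set partitions: every block of `P` lies in a block of `R`. -/
def PartLE (P R : Finset (Finset V)) : Prop :=
  ∀ B ∈ P, ∃ C ∈ R, B ⊆ C

/-- `γ` is the join (least upper bound in the refinement order on partitions of `X`)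
of the partitions `γ1` and `γ2` of `X`. -/
def IsJoin (X : Finset V) (γ1 γ2 γ : Finset (Finset V)) : Prop :=
  PartLE γ1 γ ∧ PartLE γ2 γ ∧
    ∀ δ : Finset (Finset V), IsPartitionOn X δ → PartLE γ1 δ → PartLE γ2 δ → PartLE γ δ

/-- The graph consisting of all edges between distinct vertices of `X`;
`H ⊔ cliqueOn X` is the graph `H_X` of the paper. -/
def cliqueOn (X : Finset V) : SimpleGraph V :=
  SimpleGraph.fromRel (fun u v => u ∈ X ∧ v ∈ X)

/-- `u` and `v` are joined by a walk of `H` all of whose vertices lie in `B`. -/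
def ReachIn (H : SimpleGraph V) (B : Finset V) (u v : V) : Prop :=
  ∃ p : H.Walk u v, ∀ w ∈ p.support, w ∈ B

open scoped Classical in
/-- `{H[P]}`: the partition induced by `P` via the connected components of the
subgraphs of `H` induced by the blocks of `P`. -/
noncomputable def indPart (H : SimpleGraph V) (P : Finset (Finset V)) :
    Finset (Finset V) :=
  P.biUnion (fun B => B.image (fun v => B.filter (fun w => ReachIn H B v w)))

open scoped Classical in
/-- `P ⊓ W`: the partition induced on `W` by the nonempty traces of blocks of `P`. -/
noncomputable def restrictPart (P : Finset (Finset V)) (W : Finset V) :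
    Finset (Finset V) :=
  (P.image (fun B => B ∩ W)).filter (fun B => B.Nonempty)


set_option linter.unusedSectionVars false
set_option linter.unusedVariables false

/-! ### ReachIn basics -/

lemma ReachIn.refl {H : SimpleGraph V} {B : Finset V} {u : V} (hu : u ∈ B) :
    ReachIn H B u u :=
  ⟨SimpleGraph.Walk.nil, by simp [hu]⟩

lemma ReachIn.start_mem {H : SimpleGraph V} {B : Finset V} {u v : V}
    (h : ReachIn H B u v) : u ∈ B := by
  obtain ⟨p, hp⟩ := h; exact hp u p.start_mem_support

lemma ReachIn.end_mem {H : SimpleGraph V} {B : Finset V} {u v : V}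
    (h : ReachIn H B u v) : v ∈ B := by
  obtain ⟨p, hp⟩ := h; exact hp v p.end_mem_support

lemma ReachIn.symm {H : SimpleGraph V} {B : Finset V} {u v : V}
    (h : ReachIn H B u v) : ReachIn H B v u := by
  obtain ⟨p, hp⟩ := h
  exact ⟨p.reverse, by simpa using hp⟩

lemma ReachIn.trans {H : SimpleGraph V} {B : Finset V} {u v w : V}
    (h : ReachIn H B u v) (h' : ReachIn H B v w) : ReachIn H B u w := by
  obtain ⟨p, hp⟩ := h; obtain ⟨q, hq⟩ := h'
  refine ⟨p.append q, fun z hz => ?_⟩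
  rcases (SimpleGraph.Walk.mem_support_append_iff _ _).1 hz with h | h
  · exact hp z h
  · exact hq z h

lemma ReachIn.cons {H : SimpleGraph V} {B : Finset V} {u w v : V}
    (h : H.Adj u w) (hu : u ∈ B) (hr : ReachIn H B w v) : ReachIn H B u v := by
  obtain ⟨p, hp⟩ := hr
  refine ⟨SimpleGraph.Walk.cons h p, fun z hz => ?_⟩
  rw [SimpleGraph.Walk.support_cons, List.mem_cons] at hz
  rcases hz with rfl | hz
  · exact hu
  · exact hp z hz

lemma ReachIn.mono {H H' : SimpleGraph V} {B B' : Finset V} {u v : V}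
    (hH : H ≤ H') (hB : B ⊆ B') (h : ReachIn H B u v) : ReachIn H' B' u v := by
  obtain ⟨p, hp⟩ := h
  induction p with
  | nil => exact ReachIn.refl (hB (hp _ (by simp)))
  | cons hadj q ih =>
      refine ReachIn.cons (hH hadj) (hB (hp _ (by simp))) (ih fun w hw => hp w (by simp [hw]))

lemma ReachIn.single {H : SimpleGraph V} {B : Finset V} {u v : V}
    (h : H.Adj u v) (hu : u ∈ B) (hv : v ∈ B) : ReachIn H B u v :=
  ReachIn.cons h hu (ReachIn.refl hv)

/-! ### Connectivity bridge -/

lemma reachIn_of_induce_reachable {H : SimpleGraph V} {B : Finset V} {u v : V}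
    (hu : u ∈ B) (hv : v ∈ B)
    (h : (H.induce (B : Set V)).Reachable ⟨u, by simpa using hu⟩ ⟨v, by simpa using hv⟩) :
    ReachIn H B u v := by
  obtain ⟨p⟩ := h
  refine ⟨p.map (SimpleGraph.Embedding.induce (B : Set V)).toHom, fun w hw => ?_⟩
  erw [SimpleGraph.Walk.support_map] at hw
  simp only [List.mem_map] at hw
  obtain ⟨a, _, rfl⟩ := hw
  exact a.2

lemma induce_reachable_of_reachIn {H : SimpleGraph V} {B : Finset V} {u v : V}
    (h : ReachIn H B u v) :
    (H.induce (B : Set V)).Reachable ⟨u, by simpa using h.start_mem⟩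
      ⟨v, by simpa using h.end_mem⟩ := by
  obtain ⟨p, hp⟩ := h
  induction p with
  | nil => rfl
  | cons hadj q ih =>
      rename_i a b c
      have ha : a ∈ B := hp _ (by simp)
      have hb : b ∈ B := hp _ (by simp)
      have h1 : (H.induce (B : Set V)).Adj ⟨a, by simpa using ha⟩ ⟨b, by simpa using hb⟩ := by
        simpa using hadj
      exact h1.reachable.trans (ih (fun w hw => hp w (by simp [hw])))

lemma connected_induce_iff {H : SimpleGraph V} {B : Finset V} :
    (H.induce (B : Set V)).Connected ↔ B.Nonempty ∧ ∀ u ∈ B, ∀ v ∈ B, ReachIn H B u v := by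
  constructor
  · intro h
    have hne : B.Nonempty := by
      obtain ⟨⟨w, hw⟩⟩ := h.nonempty
      exact ⟨w, by simpa using hw⟩
    exact ⟨hne, fun u hu v hv =>
      reachIn_of_induce_reachable hu hv (h.preconnected _ _)⟩
  · rintro ⟨hne, h⟩
    rw [SimpleGraph.connected_iff]
    constructor
    · rintro ⟨a, ha⟩ ⟨b, hb⟩
      have := induce_reachable_of_reachIn (h a (by simpa using ha) b (by simpa using hb))
      exact this
    · obtain ⟨w, hw⟩ := hne
      exact ⟨⟨w, by simpa using hw⟩⟩

lemma connected_induce_mono {H H' : SimpleGraph V} {B : Finset V} (hle : H ≤ H')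
    (h : (H.induce (B : Set V)).Connected) : (H'.induce (B : Set V)).Connected := by
  rw [connected_induce_iff] at h ⊢
  exact ⟨h.1, fun u hu v hv => (h.2 u hu v hv).mono hle (subset_refl _)⟩

/-! ### Partition basics -/

lemma part_block_nonempty {U : Finset V} {P : Finset (Finset V)} (h : IsPartitionOn U P)
    {B : Finset V} (hB : B ∈ P) : B.Nonempty := by
  rcases B.eq_empty_or_nonempty with rfl | hne
  · exact absurd hB h.1
  · exact hne

lemma part_unique {U : Finset V} {P : Finset (Finset V)} (h : IsPartitionOn U P)
    {B C : Finset V} (hB : B ∈ P) (hC : C ∈ P) {v : V} (hvB : v ∈ B) (hvC : v ∈ C) :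
    B = C := by
  obtain ⟨D, -, hD⟩ := h.2.2 v (h.2.1 B hB hvB)
  rw [hD B ⟨hB, hvB⟩, hD C ⟨hC, hvC⟩]

lemma part_exists {U : Finset V} {P : Finset (Finset V)} (h : IsPartitionOn U P)
    {v : V} (hv : v ∈ U) : ∃ B ∈ P, v ∈ B := by
  obtain ⟨B, hB, -⟩ := h.2.2 v hv
  exact ⟨B, hB.1, hB.2⟩

lemma mem_restrictPart {P : Finset (Finset V)} {W : Finset V} {C : Finset V} :
    C ∈ restrictPart P W ↔ (∃ B ∈ P, C = B ∩ W) ∧ C.Nonempty := by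
  classical
  rw [restrictPart]
  constructor
  · intro h
    rw [Finset.mem_filter] at h
    obtain ⟨h1, h2⟩ := h
    rw [Finset.mem_image] at h1
    obtain ⟨B, hB, hBC⟩ := h1
    exact ⟨⟨B, hB, hBC.symm⟩, h2⟩
  · rintro ⟨⟨B, hB, rfl⟩, hne⟩
    exact Finset.mem_filter.2 ⟨Finset.mem_image.2 ⟨B, hB, rfl⟩, hne⟩

open scoped Classical in
lemma mem_indPart {H : SimpleGraph V} {P : Finset (Finset V)} {C : Finset V} :
    C ∈ indPart H P ↔ ∃ B ∈ P, ∃ v ∈ B, C = B.filter (fun w => ReachIn H B v w) := by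
  rw [indPart]
  constructor
  · intro h
    rw [Finset.mem_biUnion] at h
    obtain ⟨B, hB, h⟩ := h
    rw [Finset.mem_image] at h
    obtain ⟨v, hv, h⟩ := h
    exact ⟨B, hB, v, hv, h.symm⟩
  · rintro ⟨B, hB, v, hv, rfl⟩
    exact Finset.mem_biUnion.2 ⟨B, hB, Finset.mem_image.2 ⟨v, hv, rfl⟩⟩

open scoped Classical in
lemma comp_eq_of_reachIn {H : SimpleGraph V} {B : Finset V} {v w : V}
    (h : ReachIn H B v w) :
    B.filter (fun z => ReachIn H B v z) = B.filter (fun z => ReachIn H B w z) := by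
  ext z
  simp only [Finset.mem_filter, and_congr_right_iff]
  exact fun _ => ⟨fun hz => h.symm.trans hz, fun hz => h.trans hz⟩

lemma restrictPart_isPartitionOn {U W : Finset V} {P : Finset (Finset V)}
    (h : IsPartitionOn U P) (hW : W ⊆ U) : IsPartitionOn W (restrictPart P W) := by
  refine ⟨?_, ?_, ?_⟩
  · intro hmem
    rcases mem_restrictPart.1 hmem with ⟨-, hne⟩
    exact hne.ne_empty rfl
  · intro C hC
    rcases mem_restrictPart.1 hC with ⟨⟨B, -, rfl⟩, -⟩
    exact Finset.inter_subset_right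
  · intro v hv
    obtain ⟨B, hB, hvB⟩ := part_exists h (hW hv)
    refine ⟨B ∩ W, ⟨mem_restrictPart.2 ⟨⟨B, hB, rfl⟩, ⟨v, Finset.mem_inter.2 ⟨hvB, hv⟩⟩⟩,
      Finset.mem_inter.2 ⟨hvB, hv⟩⟩, ?_⟩
    rintro C ⟨hC, hvC⟩
    rcases mem_restrictPart.1 hC with ⟨⟨B', hB', rfl⟩, -⟩
    rw [part_unique h hB' hB (Finset.mem_inter.1 hvC).1 hvB]

open scoped Classical in
lemma indPart_isPartitionOn {U : Finset V} {H : SimpleGraph V} {P : Finset (Finset V)}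
    (h : IsPartitionOn U P) : IsPartitionOn U (indPart H P) := by
  refine ⟨?_, ?_, ?_⟩
  · intro hmem
    rcases mem_indPart.1 hmem with ⟨B, hB, v, hv, hC⟩
    have : v ∈ (∅ : Finset V) := by
      rw [hC]; exact Finset.mem_filter.2 ⟨hv, ReachIn.refl hv⟩
    simp at this
  · intro C hC
    rcases mem_indPart.1 hC with ⟨B, hB, v, hv, rfl⟩
    exact fun z hz => h.2.1 B hB (Finset.mem_filter.1 hz).1
  · intro v hv
    obtain ⟨B, hB, hvB⟩ := part_exists h hv
    refine ⟨B.filter (fun w => ReachIn H B v w),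
      ⟨mem_indPart.2 ⟨B, hB, v, hvB, rfl⟩, Finset.mem_filter.2 ⟨hvB, ReachIn.refl hvB⟩⟩, ?_⟩
    rintro C ⟨hC, hvC⟩
    rcases mem_indPart.1 hC with ⟨B', hB', w, hw, rfl⟩
    have hvB' : v ∈ B' := (Finset.mem_filter.1 hvC).1
    have hBB : B' = B := part_unique h hB' hB hvB' hvB
    subst hBB
    exact comp_eq_of_reachIn (Finset.mem_filter.1 hvC).2

lemma restrictPart_restrictPart {P : Finset (Finset V)} {W X : Finset V} (hXW : X ⊆ W) :
    restrictPart (restrictPart P W) X = restrictPart P X := by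
  ext C
  rw [mem_restrictPart, mem_restrictPart]
  constructor
  · rintro ⟨⟨D, hD, rfl⟩, hne⟩
    rcases mem_restrictPart.1 hD with ⟨⟨B, hB, rfl⟩, -⟩
    exact ⟨⟨B, hB, by rw [Finset.inter_assoc, Finset.inter_eq_right.2 hXW]⟩, hne⟩
  · rintro ⟨⟨B, hB, rfl⟩, hne⟩
    have hBW : (B ∩ W).Nonempty := by
      obtain ⟨x, hx⟩ := hne
      exact ⟨x, Finset.mem_inter.2 ⟨(Finset.mem_inter.1 hx).1, hXW (Finset.mem_inter.1 hx).2⟩⟩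
    refine ⟨⟨B ∩ W, mem_restrictPart.2 ⟨⟨B, hB, rfl⟩, hBW⟩,
      by rw [Finset.inter_assoc, Finset.inter_eq_right.2 hXW]⟩, hne⟩

lemma partLE_antisymm {X : Finset V} {P R : Finset (Finset V)}
    (hP : IsPartitionOn X P) (hR : IsPartitionOn X R)
    (h1 : PartLE P R) (h2 : PartLE R P) : P = R := by
  have key : ∀ (P R : Finset (Finset V)), IsPartitionOn X P → IsPartitionOn X R →
      PartLE P R → PartLE R P → P ⊆ R := by
    intro P R hP hR h1 h2 B hB
    obtain ⟨C, hC, hBC⟩ := h1 B hB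
    obtain ⟨B', hB', hCB'⟩ := h2 C hC
    obtain ⟨v, hv⟩ := part_block_nonempty hP hB
    have hBB' : B = B' := part_unique hP hB hB' hv (hCB' (hBC hv))
    have hBC' : B = C := Finset.Subset.antisymm hBC (hBB' ▸ hCB')
    exact hBC' ▸ hC
  exact Finset.Subset.antisymm (key P R hP hR h1 h2) (key R P hR hP h2 h1)

lemma isJoin_unique {X : Finset V} {γ1 γ2 c c' : Finset (Finset V)}
    (hc : IsPartitionOn X c) (hc' : IsPartitionOn X c')
    (h : IsJoin X γ1 γ2 c) (h' : IsJoin X γ1 γ2 c') : c = c' :=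
  partLE_antisymm hc hc' (h.2.2 c' hc' h'.1 h'.2.1) (h'.2.2 c hc h.1 h.2.1)

/-! ### Crossing lemmas -/

lemma cliqueOn_adj {X : Finset V} {u v : V} :
    (cliqueOn X).Adj u v ↔ u ≠ v ∧ u ∈ X ∧ v ∈ X := by
  rw [cliqueOn, SimpleGraph.fromRel_adj]
  tauto

lemma reachIn_clique {H : SimpleGraph V} {X S : Finset V} {x y : V}
    (hx : x ∈ X) (hy : y ∈ X) (hxS : x ∈ S) (hyS : y ∈ S) :
    ReachIn (H ⊔ cliqueOn X) S x y := by
  rcases eq_or_ne x y with rfl | hne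
  · exact ReachIn.refl hxS
  · exact ReachIn.single (Or.inr (cliqueOn_adj.2 ⟨hne, hx, hy⟩)) hxS hyS

lemma claimN1 {G G1 G2 : SimpleGraph V} {V1 V2 X : Finset V}
    (hG1V : ∀ u v : V, G1.Adj u v → u ∈ V1 ∧ v ∈ V1)
    (hG2V : ∀ u v : V, G2.Adj u v → u ∈ V2 ∧ v ∈ V2)
    (hE : ∀ u v : V, G.Adj u v ↔ (G1.Adj u v ∨ G2.Adj u v))
    (hXV1 : X ⊆ V1)
    (hmem : ∀ u : V, u ∈ V1 → u ∈ V2 → u ∈ X)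
    {B : Finset V} {u v : V} (p : (G ⊔ cliqueOn X).Walk u v)
    (hp : ∀ w ∈ p.support, w ∈ B) :
    (u ∈ V1 → v ∈ V1 → (ReachIn (G1 ⊔ cliqueOn X) (B ∩ V1) u v ∨
        ∃ x, x ∈ X ∧ x ∈ B ∧ ReachIn (G1 ⊔ cliqueOn X) (B ∩ V1) u x)) ∧
    (u ∈ V1 → v ∉ V1 → ∃ x, x ∈ X ∧ x ∈ B ∧ ReachIn (G1 ⊔ cliqueOn X) (B ∩ V1) u x) := by
  revert hp
  induction p with
  | nil =>
      intro hp
      refine ⟨fun hu _ => Or.inl (ReachIn.refl (Finset.mem_inter.2 ⟨hp _ (by simp), hu⟩)),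
        fun hu hv => absurd hu hv⟩
  | cons hadj q ih =>
      rename_i a b c
      intro hp
      have haB : a ∈ B := hp a (by simp)
      have hq : ∀ w ∈ q.support, w ∈ B := fun w hw => hp w (by simp [hw])
      have main : ((G1 ⊔ cliqueOn X).Adj a b ∧ b ∈ V1) ∨ a ∈ V2 := by
        rcases (SimpleGraph.sup_adj _ _ _ _).1 hadj with hG | hK
        · rcases (hE a b).1 hG with h1 | h2
          · exact Or.inl ⟨(SimpleGraph.sup_adj _ _ _ _).2 (Or.inl h1), (hG1V a b h1).2⟩
          · exact Or.inr (hG2V a b h2).1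
        · exact Or.inl ⟨(SimpleGraph.sup_adj _ _ _ _).2 (Or.inr hK),
            hXV1 (cliqueOn_adj.1 hK).2.2⟩
      rcases main with ⟨e1, hbV1⟩ | haV2
      · constructor
        · intro haV1 hcV1
          rcases (ih hq).1 hbV1 hcV1 with r | ⟨x, hx, hxB, r⟩
          · exact Or.inl (ReachIn.cons e1 (Finset.mem_inter.2 ⟨haB, haV1⟩) r)
          · exact Or.inr ⟨x, hx, hxB, ReachIn.cons e1 (Finset.mem_inter.2 ⟨haB, haV1⟩) r⟩
        · intro haV1 hcV1
          obtain ⟨x, hx, hxB, r⟩ := (ih hq).2 hbV1 hcV1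
          exact ⟨x, hx, hxB, ReachIn.cons e1 (Finset.mem_inter.2 ⟨haB, haV1⟩) r⟩
      · constructor
        · intro haV1 _
          exact Or.inr ⟨a, hmem a haV1 haV2, haB,
            ReachIn.refl (Finset.mem_inter.2 ⟨haB, haV1⟩)⟩
        · intro haV1 _
          exact ⟨a, hmem a haV1 haV2, haB,
            ReachIn.refl (Finset.mem_inter.2 ⟨haB, haV1⟩)⟩

def SameD (δ : Finset (Finset V)) (x y : V) : Prop := ∃ D ∈ δ, x ∈ D ∧ y ∈ D

lemma SameD.trans' {X : Finset V} {δ : Finset (Finset V)} (hδ : IsPartitionOn X δ)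
    {x y z : V} (h1 : SameD δ x y) (h2 : SameD δ y z) : SameD δ x z := by
  obtain ⟨D, hD, hx, hy⟩ := h1
  obtain ⟨D', hD', hy', hz⟩ := h2
  have : D = D' := part_unique hδ hD hD' hy hy'
  exact ⟨D, hD, hx, this ▸ hz⟩

lemma SameD.refl' {X : Finset V} {δ : Finset (Finset V)} (hδ : IsPartitionOn X δ)
    {x : V} (hx : x ∈ X) : SameD δ x x := by
  obtain ⟨D, hD, hxD⟩ := part_exists hδ hx
  exact ⟨D, hD, hxD, hxD⟩

lemma claimE {G G1 G2 : SimpleGraph V} {V1 V2 X : Finset V} {B : Finset V}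
    {δ : Finset (Finset V)}
    (hG1V : ∀ u v : V, G1.Adj u v → u ∈ V1 ∧ v ∈ V1)
    (hG2V : ∀ u v : V, G2.Adj u v → u ∈ V2 ∧ v ∈ V2)
    (hE : ∀ u v : V, G.Adj u v ↔ (G1.Adj u v ∨ G2.Adj u v))
    (hmem : ∀ u : V, u ∈ V1 → u ∈ V2 → u ∈ X)
    (hXV1 : X ⊆ V1) (hXV2 : X ⊆ V2)
    (hδ : IsPartitionOn X δ)
    (H1 : ∀ x y : V, x ∈ X → y ∈ X → ReachIn G1 (B ∩ V1) x y → SameD δ x y)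
    (H2 : ∀ x y : V, x ∈ X → y ∈ X → ReachIn G2 (B ∩ V2) x y → SameD δ x y)
    {u v : V} (p : G.Walk u v) (hp : ∀ w ∈ p.support, w ∈ B) (hv : v ∈ X) :
    (u ∈ V1 → ∃ x, x ∈ X ∧ ReachIn G1 (B ∩ V1) u x ∧ SameD δ x v) ∧
    (u ∈ V2 → ∃ x, x ∈ X ∧ ReachIn G2 (B ∩ V2) u x ∧ SameD δ x v) := by
  revert hp hv
  induction p with
  | nil =>
      intro hp hv
      exact ⟨fun hu => ⟨_, hv, ReachIn.refl (Finset.mem_inter.2 ⟨hp _ (by simp), hu⟩),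
          SameD.refl' hδ hv⟩,
        fun hu => ⟨_, hv, ReachIn.refl (Finset.mem_inter.2 ⟨hp _ (by simp), hu⟩),
          SameD.refl' hδ hv⟩⟩
  | cons hadj q ih =>
      rename_i a b c
      intro hp hv
      have haB : a ∈ B := hp a (by simp)
      have hq : ∀ w ∈ q.support, w ∈ B := fun w hw => hp w (by simp [hw])
      rcases (hE a b).1 hadj with h1 | h2
      · have haV1 : a ∈ V1 := (hG1V a b h1).1
        have hbV1 : b ∈ V1 := (hG1V a b h1).2
        constructor
        · intro _
          obtain ⟨x, hx, r, hs⟩ := (ih hq hv).1 hbV1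
          exact ⟨x, hx, ReachIn.cons h1 (Finset.mem_inter.2 ⟨haB, haV1⟩) r, hs⟩
        · intro haV2
          have haX : a ∈ X := hmem a haV1 haV2
          obtain ⟨y, hy, r1, hs⟩ := (ih hq hv).1 hbV1
          have r1' : ReachIn G1 (B ∩ V1) a y :=
            ReachIn.cons h1 (Finset.mem_inter.2 ⟨haB, haV1⟩) r1
          exact ⟨a, haX, ReachIn.refl (Finset.mem_inter.2 ⟨haB, haV2⟩),
            SameD.trans' hδ (H1 a y haX hy r1') hs⟩
      · have haV2 : a ∈ V2 := (hG2V a b h2).1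
        have hbV2 : b ∈ V2 := (hG2V a b h2).2
        constructor
        · intro haV1
          have haX : a ∈ X := hmem a haV1 haV2
          obtain ⟨y, hy, r2, hs⟩ := (ih hq hv).2 hbV2
          have r2' : ReachIn G2 (B ∩ V2) a y :=
            ReachIn.cons h2 (Finset.mem_inter.2 ⟨haB, haV2⟩) r2
          exact ⟨a, haX, ReachIn.refl (Finset.mem_inter.2 ⟨haB, haV1⟩),
            SameD.trans' hδ (H2 a y haX hy r2') hs⟩
        · intro _
          obtain ⟨x, hx, r, hs⟩ := (ih hq hv).2 hbV2
          exact ⟨x, hx, ReachIn.cons h2 (Finset.mem_inter.2 ⟨haB, haV2⟩) r, hs⟩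

/-! ### Mid-level lemmas under the splitting hypotheses -/

section Split

variable {G G1 G2 : SimpleGraph V} {V1 V2 X : Finset V}

lemma trace_connected
    (hG1V : ∀ u v : V, G1.Adj u v → u ∈ V1 ∧ v ∈ V1)
    (hG2V : ∀ u v : V, G2.Adj u v → u ∈ V2 ∧ v ∈ V2)
    (hE : ∀ u v : V, G.Adj u v ↔ (G1.Adj u v ∨ G2.Adj u v))
    (hXV1 : X ⊆ V1)
    (hmem : ∀ u : V, u ∈ V1 → u ∈ V2 → u ∈ X)
    {B : Finset V}
    (hconn : ((G ⊔ cliqueOn X).induce (B : Set V)).Connected)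
    (hne : (B ∩ V1).Nonempty) :
    ((G1 ⊔ cliqueOn X).induce ((B ∩ V1 : Finset V) : Set V)).Connected := by
  rw [connected_induce_iff] at hconn ⊢
  obtain ⟨hBne, hreach⟩ := hconn
  refine ⟨hne, fun a ha b hb => ?_⟩
  have haB : a ∈ B := (Finset.mem_inter.1 ha).1
  have haV1 : a ∈ V1 := (Finset.mem_inter.1 ha).2
  have hbB : b ∈ B := (Finset.mem_inter.1 hb).1
  have hbV1 : b ∈ V1 := (Finset.mem_inter.1 hb).2
  obtain ⟨p, hp⟩ := hreach a haB b hbB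
  rcases (claimN1 hG1V hG2V hE hXV1 hmem p hp).1 haV1 hbV1 with r | ⟨x, hxX, hxB, rx⟩
  · exact r
  · obtain ⟨q, hq⟩ := hreach b hbB a haB
    rcases (claimN1 hG1V hG2V hE hXV1 hmem q hq).1 hbV1 haV1 with r' | ⟨y, hyX, hyB, ry⟩
    · exact r'.symm
    · have hxy : ReachIn (G1 ⊔ cliqueOn X) (B ∩ V1) x y :=
        reachIn_clique hxX hyX (Finset.mem_inter.2 ⟨hxB, hXV1 hxX⟩)
          (Finset.mem_inter.2 ⟨hyB, hXV1 hyX⟩)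
      exact (rx.trans hxy).trans ry.symm

lemma block_side
    (hG1V : ∀ u v : V, G1.Adj u v → u ∈ V1 ∧ v ∈ V1)
    (hG2V : ∀ u v : V, G2.Adj u v → u ∈ V2 ∧ v ∈ V2)
    (hE : ∀ u v : V, G.Adj u v ↔ (G1.Adj u v ∨ G2.Adj u v))
    (hXV1 : X ⊆ V1)
    (hmem : ∀ u : V, u ∈ V1 → u ∈ V2 → u ∈ X)
    (hcover : ∀ u : V, u ∈ V1 ∨ u ∈ V2)
    {B : Finset V}
    (hconn : ((G ⊔ cliqueOn X).induce (B : Set V)).Connected)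
    (hBX : B ∩ X = ∅) : B ⊆ V1 ∨ B ⊆ V2 := by
  by_cases hB1 : B ⊆ V1
  · exact Or.inl hB1
  · right
    obtain ⟨v0, hv0B, hv0⟩ := Finset.not_subset.1 hB1
    intro u huB
    by_contra hu2
    have huV1 : u ∈ V1 := (hcover u).resolve_right hu2
    obtain ⟨p, hp⟩ := (connected_induce_iff.1 hconn).2 u huB v0 hv0B
    obtain ⟨x, hxX, hxB, -⟩ := (claimN1 hG1V hG2V hE hXV1 hmem p hp).2 huV1 hv0
    have : x ∈ B ∩ X := Finset.mem_inter.2 ⟨hxB, hxX⟩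
    rw [hBX] at this
    simp at this

open scoped Classical in
lemma partLE_side {G' : SimpleGraph V} (hle : G' ≤ G) {W : Finset V}
    {π : Finset (Finset V)} :
    PartLE (restrictPart (indPart G' (restrictPart π W)) X)
      (restrictPart (indPart G π) X) := by
  intro D hD
  rcases mem_restrictPart.1 hD with ⟨⟨C1, hC1, rfl⟩, hne⟩
  rcases mem_indPart.1 hC1 with ⟨B1, hB1, v, hv, rfl⟩
  rcases mem_restrictPart.1 hB1 with ⟨⟨B, hB, rfl⟩, hBne⟩
  have hvB : v ∈ B := (Finset.mem_inter.1 hv).1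
  have hsub : (B ∩ W).filter (fun w => ReachIn G' (B ∩ W) v w) ∩ X ⊆
      B.filter (fun w => ReachIn G B v w) ∩ X := by
    intro z hz
    have hz1 := (Finset.mem_inter.1 hz).1
    have hzX := (Finset.mem_inter.1 hz).2
    have hzr := (Finset.mem_filter.1 hz1).2
    exact Finset.mem_inter.2 ⟨Finset.mem_filter.2
      ⟨(Finset.mem_inter.1 (Finset.mem_filter.1 hz1).1).1,
        hzr.mono hle Finset.inter_subset_left⟩, hzX⟩
  refine ⟨B.filter (fun w => ReachIn G B v w) ∩ X,
    mem_restrictPart.2 ⟨⟨_, mem_indPart.2 ⟨B, hB, v, hvB, rfl⟩, rfl⟩, ?_⟩, hsub⟩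
  obtain ⟨z, hz⟩ := hne
  exact ⟨z, hsub hz⟩

open scoped Classical in
lemma isJoin_main
    (hG1V : ∀ u v : V, G1.Adj u v → u ∈ V1 ∧ v ∈ V1)
    (hG2V : ∀ u v : V, G2.Adj u v → u ∈ V2 ∧ v ∈ V2)
    (hE : ∀ u v : V, G.Adj u v ↔ (G1.Adj u v ∨ G2.Adj u v))
    (hXV1 : X ⊆ V1) (hXV2 : X ⊆ V2)
    (hmem : ∀ u : V, u ∈ V1 → u ∈ V2 → u ∈ X)
    {π : Finset (Finset V)}
    (hπ : IsPartitionOn Finset.univ π) :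
    IsJoin X (restrictPart (indPart G1 (restrictPart π V1)) X)
      (restrictPart (indPart G2 (restrictPart π V2)) X)
      (restrictPart (indPart G π) X) := by
  have hle1 : G1 ≤ G := fun {u v} h => (hE u v).2 (Or.inl h)
  have hle2 : G2 ≤ G := fun {u v} h => (hE u v).2 (Or.inr h)
  refine ⟨partLE_side hle1, partLE_side hle2, ?_⟩
  intro δ hδ h1 h2
  intro E hEmem
  rcases mem_restrictPart.1 hEmem with ⟨⟨C, hC, rfl⟩, hne⟩
  rcases mem_indPart.1 hC with ⟨B, hB, v, hv, rfl⟩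
  obtain ⟨x0, hx0⟩ := hne
  have hx0r : ReachIn G B v x0 := (Finset.mem_filter.1 (Finset.mem_inter.1 hx0).1).2
  have hx0X : x0 ∈ X := (Finset.mem_inter.1 hx0).2
  obtain ⟨D0, hD0, hx0D⟩ := part_exists hδ hx0X
  refine ⟨D0, hD0, fun y hy => ?_⟩
  have hyr : ReachIn G B v y := (Finset.mem_filter.1 (Finset.mem_inter.1 hy).1).2
  have hyX : y ∈ X := (Finset.mem_inter.1 hy).2
  have hxy : ReachIn G B x0 y := hx0r.symm.trans hyr
  obtain ⟨p, hp⟩ := hxy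
  have H1 : ∀ a b : V, a ∈ X → b ∈ X → ReachIn G1 (B ∩ V1) a b → SameD δ a b := by
    intro a b ha hb hr
    have haB : a ∈ B ∩ V1 := hr.start_mem
    have hBV1 : B ∩ V1 ∈ restrictPart π V1 :=
      mem_restrictPart.2 ⟨⟨B, hB, rfl⟩, ⟨a, haB⟩⟩
    have hC1 : (B ∩ V1).filter (fun w => ReachIn G1 (B ∩ V1) a w) ∈
        indPart G1 (restrictPart π V1) := mem_indPart.2 ⟨B ∩ V1, hBV1, a, haB, rfl⟩
    have hamem : a ∈ (B ∩ V1).filter (fun w => ReachIn G1 (B ∩ V1) a w) ∩ X :=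
      Finset.mem_inter.2 ⟨Finset.mem_filter.2 ⟨haB, ReachIn.refl haB⟩, ha⟩
    have hbmem : b ∈ (B ∩ V1).filter (fun w => ReachIn G1 (B ∩ V1) a w) ∩ X :=
      Finset.mem_inter.2 ⟨Finset.mem_filter.2 ⟨hr.end_mem, hr⟩, hb⟩
    have hmem' : (B ∩ V1).filter (fun w => ReachIn G1 (B ∩ V1) a w) ∩ X ∈
        restrictPart (indPart G1 (restrictPart π V1)) X :=
      mem_restrictPart.2 ⟨⟨_, hC1, rfl⟩, ⟨a, hamem⟩⟩
    obtain ⟨D, hD, hsub⟩ := h1 _ hmem'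
    exact ⟨D, hD, hsub hamem, hsub hbmem⟩
  have H2 : ∀ a b : V, a ∈ X → b ∈ X → ReachIn G2 (B ∩ V2) a b → SameD δ a b := by
    intro a b ha hb hr
    have haB : a ∈ B ∩ V2 := hr.start_mem
    have hBV2 : B ∩ V2 ∈ restrictPart π V2 :=
      mem_restrictPart.2 ⟨⟨B, hB, rfl⟩, ⟨a, haB⟩⟩
    have hC1 : (B ∩ V2).filter (fun w => ReachIn G2 (B ∩ V2) a w) ∈
        indPart G2 (restrictPart π V2) := mem_indPart.2 ⟨B ∩ V2, hBV2, a, haB, rfl⟩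
    have hamem : a ∈ (B ∩ V2).filter (fun w => ReachIn G2 (B ∩ V2) a w) ∩ X :=
      Finset.mem_inter.2 ⟨Finset.mem_filter.2 ⟨haB, ReachIn.refl haB⟩, ha⟩
    have hbmem : b ∈ (B ∩ V2).filter (fun w => ReachIn G2 (B ∩ V2) a w) ∩ X :=
      Finset.mem_inter.2 ⟨Finset.mem_filter.2 ⟨hr.end_mem, hr⟩, hb⟩
    have hmem' : (B ∩ V2).filter (fun w => ReachIn G2 (B ∩ V2) a w) ∩ X ∈
        restrictPart (indPart G2 (restrictPart π V2)) X :=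
      mem_restrictPart.2 ⟨⟨_, hC1, rfl⟩, ⟨a, hamem⟩⟩
    obtain ⟨D, hD, hsub⟩ := h2 _ hmem'
    exact ⟨D, hD, hsub hamem, hsub hbmem⟩
  obtain ⟨x, hxX, hr1, hs⟩ :=
    (claimE hG1V hG2V hE hmem hXV1 hXV2 hδ H1 H2 p hp hyX).1 (hXV1 hx0X)
  have hsx : SameD δ x0 x := H1 x0 x hx0X hxX hr1
  obtain ⟨D, hD, hx0', hy'⟩ := SameD.trans' hδ hsx hs
  rwa [part_unique hδ hD0 hD hx0D hx0']

end Split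

section Split2

variable {G G1 G2 : SimpleGraph V} {V1 V2 X : Finset V}

open scoped Classical in
lemma restrictPart_eq_image {π : Finset (Finset V)} {W : Finset V} :
    restrictPart π W = (π.filter (fun B => (B ∩ W).Nonempty)).image (fun B => B ∩ W) := by
  ext C
  rw [mem_restrictPart, Finset.mem_image]
  constructor
  · rintro ⟨⟨B, hB, rfl⟩, hne⟩
    exact ⟨B, Finset.mem_filter.2 ⟨hB, hne⟩, rfl⟩
  · rintro ⟨B, hB, rfl⟩
    exact ⟨⟨B, (Finset.mem_filter.1 hB).1, rfl⟩, (Finset.mem_filter.1 hB).2⟩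

open scoped Classical in
lemma restrictPart_card {U : Finset V} {π : Finset (Finset V)} {W : Finset V}
    (hπ : IsPartitionOn U π) :
    (restrictPart π W).card = (π.filter (fun B => (B ∩ W).Nonempty)).card := by
  rw [restrictPart_eq_image]
  apply Finset.card_image_of_injOn
  intro B hB B' hB' h
  obtain ⟨v, hv⟩ := (Finset.mem_filter.1 hB).2
  have h' : B ∩ W = B' ∩ W := h
  have hv' : v ∈ B' ∩ W := h' ▸ hv
  exact part_unique hπ (Finset.mem_filter.1 hB).1 (Finset.mem_filter.1 hB').1
    (Finset.mem_inter.1 hv).1 (Finset.mem_inter.1 hv').1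

open scoped Classical in
lemma card_split
    (hG1V : ∀ u v : V, G1.Adj u v → u ∈ V1 ∧ v ∈ V1)
    (hG2V : ∀ u v : V, G2.Adj u v → u ∈ V2 ∧ v ∈ V2)
    (hE : ∀ u v : V, G.Adj u v ↔ (G1.Adj u v ∨ G2.Adj u v))
    (hXV1 : X ⊆ V1) (hXV2 : X ⊆ V2)
    (hmem : ∀ u : V, u ∈ V1 → u ∈ V2 → u ∈ X)
    (hcover : ∀ u : V, u ∈ V1 ∨ u ∈ V2)
    {π : Finset (Finset V)}
    (hπ : IsPartitionOn Finset.univ π)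
    (hconn : ∀ B ∈ π, ((G ⊔ cliqueOn X).induce (B : Set V)).Connected) :
    (restrictPart π V1).card + (restrictPart π V2).card
      = (restrictPart π X).card + π.card := by
  rw [restrictPart_card hπ, restrictPart_card hπ, restrictPart_card hπ,
    Finset.card_filter, Finset.card_filter, Finset.card_filter,
    ← Finset.sum_add_distrib]
  have : π.card = ∑ B ∈ π, 1 := by simp
  rw [this, ← Finset.sum_add_distrib]
  apply Finset.sum_congr rfl
  intro B hB
  by_cases hBX : (B ∩ X).Nonempty
  · obtain ⟨x, hx⟩ := hBX
    have hxB := (Finset.mem_inter.1 hx).1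
    have hxX := (Finset.mem_inter.1 hx).2
    have h1 : (B ∩ V1).Nonempty := ⟨x, Finset.mem_inter.2 ⟨hxB, hXV1 hxX⟩⟩
    have h2 : (B ∩ V2).Nonempty := ⟨x, Finset.mem_inter.2 ⟨hxB, hXV2 hxX⟩⟩
    have hne : (B ∩ X).Nonempty := ⟨x, hx⟩
    simp [h1, h2, hne]
  · have hBXe : B ∩ X = ∅ := Finset.not_nonempty_iff_eq_empty.1 hBX
    obtain ⟨v, hv⟩ := part_block_nonempty hπ hB
    rcases block_side hG1V hG2V hE hXV1 hmem hcover (hconn B hB) hBXe with hs | hs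
    · have h1 : (B ∩ V1).Nonempty := ⟨v, Finset.mem_inter.2 ⟨hv, hs hv⟩⟩
      have h2 : ¬(B ∩ V2).Nonempty := by
        rintro ⟨w, hw⟩
        have hwB := (Finset.mem_inter.1 hw).1
        have : w ∈ X := hmem w (hs hwB) (Finset.mem_inter.1 hw).2
        exact absurd (Finset.mem_inter.2 ⟨hwB, this⟩) (by simp [hBXe])
      simp [h1, h2, hBX]
    · have h2 : (B ∩ V2).Nonempty := ⟨v, Finset.mem_inter.2 ⟨hv, hs hv⟩⟩
      have h1 : ¬(B ∩ V1).Nonempty := by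
        rintro ⟨w, hw⟩
        have hwB := (Finset.mem_inter.1 hw).1
        have : w ∈ X := hmem w (Finset.mem_inter.1 hw).2 (hs hwB)
        exact absurd (Finset.mem_inter.2 ⟨hwB, this⟩) (by simp [hBXe])
      simp [h1, h2, hBX]

lemma phi_inj
    (hG1V : ∀ u v : V, G1.Adj u v → u ∈ V1 ∧ v ∈ V1)
    (hG2V : ∀ u v : V, G2.Adj u v → u ∈ V2 ∧ v ∈ V2)
    (hE : ∀ u v : V, G.Adj u v ↔ (G1.Adj u v ∨ G2.Adj u v))
    (hXV1 : X ⊆ V1) (hXV2 : X ⊆ V2)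
    (hmem : ∀ u : V, u ∈ V1 → u ∈ V2 → u ∈ X)
    (hcover : ∀ u : V, u ∈ V1 ∨ u ∈ V2)
    {π π' : Finset (Finset V)}
    (hπ : IsPartitionOn Finset.univ π)
    (hconn : ∀ B ∈ π, ((G ⊔ cliqueOn X).induce (B : Set V)).Connected)
    (hπ' : IsPartitionOn Finset.univ π')
    (hconn' : ∀ B ∈ π', ((G ⊔ cliqueOn X).induce (B : Set V)).Connected)
    (e1 : restrictPart π V1 = restrictPart π' V1)
    (e2 : restrictPart π V2 = restrictPart π' V2) : π = π' := by
  have key : ∀ (π π' : Finset (Finset V)), IsPartitionOn Finset.univ π →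
      (∀ B ∈ π, ((G ⊔ cliqueOn X).induce (B : Set V)).Connected) →
      IsPartitionOn Finset.univ π' →
      (∀ B ∈ π', ((G ⊔ cliqueOn X).induce (B : Set V)).Connected) →
      restrictPart π V1 = restrictPart π' V1 →
      restrictPart π V2 = restrictPart π' V2 → π ⊆ π' := by
    clear e1 e2 hπ hconn hπ' hconn' π π'
    intro π π' hπ hconn hπ' hconn' e1 e2 B hB
    have hBdecomp : B = (B ∩ V1) ∪ (B ∩ V2) := by
      ext z
      simp only [Finset.mem_union, Finset.mem_inter]
      constructor
      · intro hz
        rcases hcover z with h | h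
        · exact Or.inl ⟨hz, h⟩
        · exact Or.inr ⟨hz, h⟩
      · rintro (⟨h, -⟩ | ⟨h, -⟩) <;> exact h
    by_cases hBX : (B ∩ X).Nonempty
    · obtain ⟨x, hx⟩ := hBX
      have hxB := (Finset.mem_inter.1 hx).1
      have hxX := (Finset.mem_inter.1 hx).2
      have m1 : B ∩ V1 ∈ restrictPart π' V1 := e1 ▸ mem_restrictPart.2
        ⟨⟨B, hB, rfl⟩, ⟨x, Finset.mem_inter.2 ⟨hxB, hXV1 hxX⟩⟩⟩
      have m2 : B ∩ V2 ∈ restrictPart π' V2 := e2 ▸ mem_restrictPart.2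
        ⟨⟨B, hB, rfl⟩, ⟨x, Finset.mem_inter.2 ⟨hxB, hXV2 hxX⟩⟩⟩
      rcases mem_restrictPart.1 m1 with ⟨⟨B1, hB1, he1⟩, -⟩
      rcases mem_restrictPart.1 m2 with ⟨⟨B2, hB2, he2⟩, -⟩
      have hx1 : x ∈ B1 := by
        have : x ∈ B ∩ V1 := Finset.mem_inter.2 ⟨hxB, hXV1 hxX⟩
        rw [he1] at this
        exact (Finset.mem_inter.1 this).1
      have hx2 : x ∈ B2 := by
        have : x ∈ B ∩ V2 := Finset.mem_inter.2 ⟨hxB, hXV2 hxX⟩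
        rw [he2] at this
        exact (Finset.mem_inter.1 this).1
      have hB12 : B1 = B2 := part_unique hπ' hB1 hB2 hx1 hx2
      have : B = B1 := by
        rw [hBdecomp, he1, he2, ← hB12, ← Finset.inter_union_distrib_left]
        rw [Finset.inter_eq_left.2]
        intro z hz
        rcases hcover z with h | h
        · exact Finset.mem_union.2 (Or.inl h)
        · exact Finset.mem_union.2 (Or.inr h)
      exact this ▸ hB1
    · have hBXe : B ∩ X = ∅ := Finset.not_nonempty_iff_eq_empty.1 hBX
      have hBne := part_block_nonempty hπ hB
      rcases block_side hG1V hG2V hE hXV1 hmem hcover (hconn B hB) hBXe with hs | hs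
      · have hBV1 : B ∩ V1 = B := Finset.inter_eq_left.2 hs
        have m1 : B ∈ restrictPart π' V1 := by
          rw [← hBV1]
          exact e1 ▸ mem_restrictPart.2 ⟨⟨B, hB, rfl⟩, hBV1.symm ▸ hBne⟩
        rcases mem_restrictPart.1 m1 with ⟨⟨B', hB', he⟩, -⟩
        have hB'X : B' ∩ X = ∅ := by
          apply Finset.eq_empty_of_forall_notMem
          intro z hz
          have hzB' := (Finset.mem_inter.1 hz).1
          have hzX := (Finset.mem_inter.1 hz).2
          have : z ∈ B := by
            rw [he]
            exact Finset.mem_inter.2 ⟨hzB', hXV1 hzX⟩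
          exact absurd (Finset.mem_inter.2 ⟨this, hzX⟩) (by simp [hBXe])
        rcases block_side hG1V hG2V hE hXV1 hmem hcover (hconn' B' hB') hB'X with hs' | hs'
        · have : B = B' := by rw [he, Finset.inter_eq_left.2 hs']
          exact this ▸ hB'
        · exfalso
          obtain ⟨v, hv⟩ := hBne
          have hvB' : v ∈ B' := by
            have : v ∈ B' ∩ V1 := he ▸ hv
            exact (Finset.mem_inter.1 this).1
          have : v ∈ X := hmem v (hs hv) (hs' hvB')
          exact absurd (Finset.mem_inter.2 ⟨hv, this⟩) (by simp [hBXe])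
      · have hBV2 : B ∩ V2 = B := Finset.inter_eq_left.2 hs
        have m2 : B ∈ restrictPart π' V2 := by
          rw [← hBV2]
          exact e2 ▸ mem_restrictPart.2 ⟨⟨B, hB, rfl⟩, hBV2.symm ▸ hBne⟩
        rcases mem_restrictPart.1 m2 with ⟨⟨B', hB', he⟩, -⟩
        have hB'X : B' ∩ X = ∅ := by
          apply Finset.eq_empty_of_forall_notMem
          intro z hz
          have hzB' := (Finset.mem_inter.1 hz).1
          have hzX := (Finset.mem_inter.1 hz).2
          have : z ∈ B := by
            rw [he]
            exact Finset.mem_inter.2 ⟨hzB', hXV2 hzX⟩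
          exact absurd (Finset.mem_inter.2 ⟨this, hzX⟩) (by simp [hBXe])
        rcases block_side hG1V hG2V hE hXV1 hmem hcover (hconn' B' hB') hB'X with hs' | hs'
        · exfalso
          obtain ⟨v, hv⟩ := hBne
          have hvB' : v ∈ B' := by
            have : v ∈ B' ∩ V2 := he ▸ hv
            exact (Finset.mem_inter.1 this).1
          have : v ∈ X := hmem v (hs' hvB') (hs hv)
          exact absurd (Finset.mem_inter.2 ⟨hv, this⟩) (by simp [hBXe])
        · have : B = B' := by rw [he, Finset.inter_eq_left.2 hs']
          exact this ▸ hB'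
  exact Finset.Subset.antisymm (key π π' hπ hconn hπ' hconn' e1 e2)
    (key π' π hπ' hconn' hπ hconn e1.symm e2.symm)

end Split2

/-! ### The merged partition -/

open scoped Classical in
noncomputable def mergedPart (π1 π2 β : Finset (Finset V)) (X : Finset V) :
    Finset (Finset V) :=
  π1.filter (fun B => B ∩ X = ∅) ∪ π2.filter (fun B => B ∩ X = ∅) ∪
    β.image (fun b => ((π1 ∪ π2).filter (fun B => ∃ x ∈ b, x ∈ B)).biUnion id)

section Merge

variable {V1 V2 X : Finset V} {π1 π2 β : Finset (Finset V)}

open scoped Classical in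
lemma mergedPart_comm : mergedPart π1 π2 β X = mergedPart π2 π1 β X := by
  rw [mergedPart, mergedPart, Finset.union_comm π1 π2,
    Finset.union_comm (π1.filter _) (π2.filter _)]

open scoped Classical in
lemma mem_mergedPart {C : Finset V} :
    C ∈ mergedPart π1 π2 β X ↔
      (C ∈ π1 ∧ C ∩ X = ∅) ∨ (C ∈ π2 ∧ C ∩ X = ∅) ∨
      ∃ b ∈ β, C = ((π1 ∪ π2).filter (fun B => ∃ x ∈ b, x ∈ B)).biUnion id := by
  rw [mergedPart]
  simp only [Finset.mem_union, Finset.mem_filter, Finset.mem_image]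
  constructor
  · rintro ((⟨h, he⟩ | ⟨h, he⟩) | ⟨b, hb, rfl⟩)
    · exact Or.inl ⟨h, he⟩
    · exact Or.inr (Or.inl ⟨h, he⟩)
    · exact Or.inr (Or.inr ⟨b, hb, rfl⟩)
  · rintro (⟨h, he⟩ | ⟨h, he⟩ | ⟨b, hb, rfl⟩)
    · exact Or.inl (Or.inl ⟨h, he⟩)
    · exact Or.inl (Or.inr ⟨h, he⟩)
    · exact Or.inr ⟨b, hb, rfl⟩

lemma trace_eq_b (h1 : IsPartitionOn V1 π1) (hb1 : restrictPart π1 X = β)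
    (hβ : IsPartitionOn X β) {B b : Finset V} {x : V}
    (hB : B ∈ π1) (hb : b ∈ β) (hx : x ∈ B) (hxb : x ∈ b) : B ∩ X = b := by
  have hxX : x ∈ X := hβ.2.1 b hb hxb
  have hm : B ∩ X ∈ β := by
    rw [← hb1]
    exact mem_restrictPart.2 ⟨⟨B, hB, rfl⟩, ⟨x, Finset.mem_inter.2 ⟨hx, hxX⟩⟩⟩
  exact part_unique hβ hm hb (Finset.mem_inter.2 ⟨hx, hxX⟩) hxb

open scoped Classical in
lemma blob_eq (h1 : IsPartitionOn V1 π1) (h2 : IsPartitionOn V2 π2)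
    (hb1 : restrictPart π1 X = β) (hb2 : restrictPart π2 X = β)
    (hβ : IsPartitionOn X β) {b B1 B2 : Finset V} {x : V}
    (hb : b ∈ β) (hxb : x ∈ b) (hB1 : B1 ∈ π1) (hx1 : x ∈ B1)
    (hB2 : B2 ∈ π2) (hx2 : x ∈ B2) :
    ((π1 ∪ π2).filter (fun B => ∃ y ∈ b, y ∈ B)).biUnion id = B1 ∪ B2 := by
  apply Finset.Subset.antisymm
  · intro z hz
    rw [Finset.mem_biUnion] at hz
    obtain ⟨B, hBf, hzB⟩ := hz
    rw [Finset.mem_filter] at hBf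
    obtain ⟨hBu, y, hyb, hyB⟩ := hBf
    rcases Finset.mem_union.1 hBu with hBp | hBp
    · have : B ∩ X = b := trace_eq_b h1 hb1 hβ hBp hb hyB hyb
      have hxB : x ∈ B := (Finset.mem_inter.1 (this.symm ▸ hxb)).1
      have : B = B1 := part_unique h1 hBp hB1 hxB hx1
      exact Finset.mem_union.2 (Or.inl (this ▸ hzB))
    · have : B ∩ X = b := trace_eq_b h2 hb2 hβ hBp hb hyB hyb
      have hxB : x ∈ B := (Finset.mem_inter.1 (this.symm ▸ hxb)).1
      have : B = B2 := part_unique h2 hBp hB2 hxB hx2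
      exact Finset.mem_union.2 (Or.inr (this ▸ hzB))
  · intro z hz
    rw [Finset.mem_biUnion]
    rcases Finset.mem_union.1 hz with h | h
    · exact ⟨B1, Finset.mem_filter.2 ⟨Finset.mem_union.2 (Or.inl hB1), x, hxb, hx1⟩, h⟩
    · exact ⟨B2, Finset.mem_filter.2 ⟨Finset.mem_union.2 (Or.inr hB2), x, hxb, hx2⟩, h⟩

open scoped Classical in
lemma exists_blob_parts (h1 : IsPartitionOn V1 π1) (h2 : IsPartitionOn V2 π2)
    (hβ : IsPartitionOn X β) (hXV1 : X ⊆ V1) (hXV2 : X ⊆ V2)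
    {b : Finset V} (hb : b ∈ β) :
    ∃ x B1 B2, x ∈ b ∧ B1 ∈ π1 ∧ x ∈ B1 ∧ B2 ∈ π2 ∧ x ∈ B2 := by
  obtain ⟨x, hxb⟩ := part_block_nonempty hβ hb
  have hxX : x ∈ X := hβ.2.1 b hb hxb
  obtain ⟨B1, hB1, hx1⟩ := part_exists h1 (hXV1 hxX)
  obtain ⟨B2, hB2, hx2⟩ := part_exists h2 (hXV2 hxX)
  exact ⟨x, B1, B2, hxb, hB1, hx1, hB2, hx2⟩

open scoped Classical in
lemma merged_unique (h1 : IsPartitionOn V1 π1) (h2 : IsPartitionOn V2 π2)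
    (hb1 : restrictPart π1 X = β) (hb2 : restrictPart π2 X = β)
    (hβ : IsPartitionOn X β) (hXV1 : X ⊆ V1) (hXV2 : X ⊆ V2)
    (hmem : ∀ u : V, u ∈ V1 → u ∈ V2 → u ∈ X)
    {C D : Finset V} {v : V} (hC : C ∈ mergedPart π1 π2 β X)
    (hD : D ∈ mergedPart π1 π2 β X) (hvC : v ∈ C) (hvD : v ∈ D) : C = D := by
  -- helper for blob expansion
  have expand : ∀ b ∈ β, ∃ x B1 B2, x ∈ b ∧ B1 ∈ π1 ∧ x ∈ B1 ∧ B2 ∈ π2 ∧ x ∈ B2 ∧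
      ((π1 ∪ π2).filter (fun B => ∃ y ∈ b, y ∈ B)).biUnion id = B1 ∪ B2 := by
    intro b hb
    obtain ⟨x, B1, B2, hxb, hB1, hx1, hB2, hx2⟩ := exists_blob_parts h1 h2 hβ hXV1 hXV2 hb
    exact ⟨x, B1, B2, hxb, hB1, hx1, hB2, hx2, blob_eq h1 h2 hb1 hb2 hβ hb hxb hB1 hx1 hB2 hx2⟩
  -- case side-1 block vs anything
  have side1 : ∀ {C D v}, C ∈ π1 → C ∩ X = ∅ → D ∈ mergedPart π1 π2 β X →
      v ∈ C → v ∈ D → C = D := by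
    intro C D v hCp hCX hD hvC hvD
    rcases mem_mergedPart.1 hD with ⟨hDp, -⟩ | ⟨hDp, hDX⟩ | ⟨b, hb, rfl⟩
    · exact part_unique h1 hCp hDp hvC hvD
    · exfalso
      have hvX : v ∈ X := hmem v (h1.2.1 C hCp hvC) (h2.2.1 D hDp hvD)
      exact absurd (Finset.mem_inter.2 ⟨hvC, hvX⟩) (by simp [hCX])
    · exfalso
      obtain ⟨x, B1, B2, hxb, hB1, hx1, hB2, hx2, hblob⟩ := expand b hb
      rw [hblob] at hvD
      rcases Finset.mem_union.1 hvD with h | h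
      · have : C = B1 := part_unique h1 hCp hB1 hvC h
        have hxC : x ∈ C ∩ X := this ▸ Finset.mem_inter.2 ⟨hx1, hβ.2.1 b hb hxb⟩
        exact absurd hxC (by simp [hCX])
      · have hvX : v ∈ X := hmem v (h1.2.1 C hCp hvC) (h2.2.1 B2 hB2 h)
        exact absurd (Finset.mem_inter.2 ⟨hvC, hvX⟩) (by simp [hCX])
  have side2 : ∀ {C D v}, C ∈ π2 → C ∩ X = ∅ → D ∈ mergedPart π1 π2 β X →
      v ∈ C → v ∈ D → C = D := by
    intro C D v hCp hCX hD hvC hvD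
    rcases mem_mergedPart.1 hD with ⟨hDp, hDX⟩ | ⟨hDp, -⟩ | ⟨b, hb, rfl⟩
    · exfalso
      have hvX : v ∈ X := hmem v (h1.2.1 D hDp hvD) (h2.2.1 C hCp hvC)
      exact absurd (Finset.mem_inter.2 ⟨hvC, hvX⟩) (by simp [hCX])
    · exact part_unique h2 hCp hDp hvC hvD
    · exfalso
      obtain ⟨x, B1, B2, hxb, hB1, hx1, hB2, hx2, hblob⟩ := expand b hb
      rw [hblob] at hvD
      rcases Finset.mem_union.1 hvD with h | h
      · have hvX : v ∈ X := hmem v (h1.2.1 B1 hB1 h) (h2.2.1 C hCp hvC)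
        exact absurd (Finset.mem_inter.2 ⟨hvC, hvX⟩) (by simp [hCX])
      · have : C = B2 := part_unique h2 hCp hB2 hvC h
        have hxC : x ∈ C ∩ X := this ▸ Finset.mem_inter.2 ⟨hx2, hβ.2.1 b hb hxb⟩
        exact absurd hxC (by simp [hCX])
  rcases mem_mergedPart.1 hC with ⟨hCp, hCX⟩ | ⟨hCp, hCX⟩ | ⟨b, hb, rfl⟩
  · exact side1 hCp hCX hD hvC hvD
  · exact side2 hCp hCX hD hvC hvD
  · rcases mem_mergedPart.1 hD with ⟨hDp, hDX⟩ | ⟨hDp, hDX⟩ | ⟨b', hb', rfl⟩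
    · exact (side1 hDp hDX hC hvD hvC).symm
    · exact (side2 hDp hDX hC hvD hvC).symm
    · obtain ⟨x, B1, B2, hxb, hB1, hx1, hB2, hx2, hblob⟩ := expand b hb
      obtain ⟨x', B1', B2', hxb', hB1', hx1', hB2', hx2', hblob'⟩ := expand b' hb'
      rw [hblob] at hvC ⊢
      rw [hblob'] at hvD ⊢
      have hbb' : b = b' := by
        have e1 : B1 ∩ X = b := trace_eq_b h1 hb1 hβ hB1 hb hx1 hxb
        have e2 : B2 ∩ X = b := trace_eq_b h2 hb2 hβ hB2 hb hx2 hxb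
        have e1' : B1' ∩ X = b' := trace_eq_b h1 hb1 hβ hB1' hb' hx1' hxb'
        have e2' : B2' ∩ X = b' := trace_eq_b h2 hb2 hβ hB2' hb' hx2' hxb'
        rcases Finset.mem_union.1 hvC with h | h <;> rcases Finset.mem_union.1 hvD with h' | h'
        · have : B1 = B1' := part_unique h1 hB1 hB1' h h'
          rw [← e1, ← e1', this]
        · have hvX : v ∈ X := hmem v (h1.2.1 B1 hB1 h) (h2.2.1 B2' hB2' h')
          have hv1 : v ∈ b := e1 ▸ Finset.mem_inter.2 ⟨h, hvX⟩
          have hv2 : v ∈ b' := e2' ▸ Finset.mem_inter.2 ⟨h', hvX⟩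
          exact part_unique hβ hb hb' hv1 hv2
        · have hvX : v ∈ X := hmem v (h1.2.1 B1' hB1' h') (h2.2.1 B2 hB2 h)
          have hv1 : v ∈ b := e2 ▸ Finset.mem_inter.2 ⟨h, hvX⟩
          have hv2 : v ∈ b' := e1' ▸ Finset.mem_inter.2 ⟨h', hvX⟩
          exact part_unique hβ hb hb' hv1 hv2
        · have : B2 = B2' := part_unique h2 hB2 hB2' h h'
          rw [← e2, ← e2', this]
      subst hbb'
      have eq1 : B1 = B1' := by
        have hx'X : x' ∈ X := hβ.2.1 b hb hxb'
        have e1 : B1 ∩ X = b := trace_eq_b h1 hb1 hβ hB1 hb hx1 hxb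
        have : x' ∈ B1 := (Finset.mem_inter.1 (e1.symm ▸ hxb')).1
        exact part_unique h1 hB1 hB1' this hx1'
      have eq2 : B2 = B2' := by
        have e2 : B2 ∩ X = b := trace_eq_b h2 hb2 hβ hB2 hb hx2 hxb
        have : x' ∈ B2 := (Finset.mem_inter.1 (e2.symm ▸ hxb')).1
        exact part_unique h2 hB2 hB2' this hx2'
      rw [eq1, eq2]

end Merge

section Merge2

variable {G G1 G2 : SimpleGraph V} {V1 V2 X : Finset V} {π1 π2 β : Finset (Finset V)}

open scoped Classical in
lemma merged_isPartitionOn (h1 : IsPartitionOn V1 π1) (h2 : IsPartitionOn V2 π2)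
    (hb1 : restrictPart π1 X = β) (hb2 : restrictPart π2 X = β)
    (hβ : IsPartitionOn X β) (hXV1 : X ⊆ V1) (hXV2 : X ⊆ V2)
    (hmem : ∀ u : V, u ∈ V1 → u ∈ V2 → u ∈ X)
    (hcover : ∀ u : V, u ∈ V1 ∨ u ∈ V2) :
    IsPartitionOn Finset.univ (mergedPart π1 π2 β X) := by
  refine ⟨?_, fun B _ => B.subset_univ, ?_⟩
  · intro hmem'
    rcases mem_mergedPart.1 hmem' with ⟨h, -⟩ | ⟨h, -⟩ | ⟨b, hb, heq⟩
    · exact h1.1 h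
    · exact h2.1 h
    · obtain ⟨x, B1, B2, hxb, hB1, hx1, hB2, hx2⟩ := exists_blob_parts h1 h2 hβ hXV1 hXV2 hb
      have := blob_eq h1 h2 hb1 hb2 hβ hb hxb hB1 hx1 hB2 hx2
      rw [this] at heq
      have : x ∈ (∅ : Finset V) := heq ▸ Finset.mem_union.2 (Or.inl hx1)
      simp at this
  · intro v _
    have hex : ∃ B ∈ mergedPart π1 π2 β X, v ∈ B := by
      have main : ∀ (W1 W2 : Finset V) (π1 π2 : Finset (Finset V)), IsPartitionOn W1 π1 →
          IsPartitionOn W2 π2 → restrictPart π1 X = β → restrictPart π2 X = β →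
          X ⊆ W2 → v ∈ W1 → ∃ B ∈ mergedPart π1 π2 β X, v ∈ B := by
        intro W1 W2 π1 π2 h1 h2 hb1 hb2 hXW2 hv
        obtain ⟨B1, hB1, hv1⟩ := part_exists h1 hv
        by_cases hBX : B1 ∩ X = ∅
        · exact ⟨B1, mem_mergedPart.2 (Or.inl ⟨hB1, hBX⟩), hv1⟩
        · obtain ⟨x, hx⟩ := Finset.nonempty_iff_ne_empty.2 hBX
          have hxB1 := (Finset.mem_inter.1 hx).1
          have hxX := (Finset.mem_inter.1 hx).2
          have hbmem : B1 ∩ X ∈ β := by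
            rw [← hb1]
            exact mem_restrictPart.2 ⟨⟨B1, hB1, rfl⟩, ⟨x, hx⟩⟩
          obtain ⟨B2, hB2, hx2⟩ := part_exists h2 (hXW2 hxX)
          refine ⟨_, mem_mergedPart.2 (Or.inr (Or.inr ⟨B1 ∩ X, hbmem, rfl⟩)), ?_⟩
          rw [blob_eq h1 h2 hb1 hb2 hβ hbmem hx hB1 hxB1 hB2 hx2]
          exact Finset.mem_union.2 (Or.inl hv1)
      rcases hcover v with hv | hv
      · exact main V1 V2 π1 π2 h1 h2 hb1 hb2 hXV2 hv
      · obtain ⟨B, hB, hvB⟩ := main V2 V1 π2 π1 h2 h1 hb2 hb1 hXV1 hv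
        exact ⟨B, by rw [mergedPart_comm]; exact hB, hvB⟩
    obtain ⟨B, hB, hvB⟩ := hex
    refine ⟨B, ⟨hB, hvB⟩, ?_⟩
    rintro C ⟨hC, hvC⟩
    exact merged_unique h1 h2 hb1 hb2 hβ hXV1 hXV2 hmem hC hB hvC hvB

open scoped Classical in
lemma merged_conn (h1 : IsPartitionOn V1 π1) (h2 : IsPartitionOn V2 π2)
    (hb1 : restrictPart π1 X = β) (hb2 : restrictPart π2 X = β)
    (hβ : IsPartitionOn X β) (hXV1 : X ⊆ V1) (hXV2 : X ⊆ V2)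
    (hle1 : G1 ≤ G) (hle2 : G2 ≤ G)
    (hconn1 : ∀ B ∈ π1, ((G1 ⊔ cliqueOn X).induce (B : Set V)).Connected)
    (hconn2 : ∀ B ∈ π2, ((G2 ⊔ cliqueOn X).induce (B : Set V)).Connected) :
    ∀ C ∈ mergedPart π1 π2 β X, ((G ⊔ cliqueOn X).induce (C : Set V)).Connected := by
  intro C hC
  have hsup1 : G1 ⊔ cliqueOn X ≤ G ⊔ cliqueOn X := sup_le_sup_right hle1 _
  have hsup2 : G2 ⊔ cliqueOn X ≤ G ⊔ cliqueOn X := sup_le_sup_right hle2 _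
  rcases mem_mergedPart.1 hC with ⟨h, -⟩ | ⟨h, -⟩ | ⟨b, hb, rfl⟩
  · exact connected_induce_mono hsup1 (hconn1 C h)
  · exact connected_induce_mono hsup2 (hconn2 C h)
  · obtain ⟨x, B1, B2, hxb, hB1, hx1, hB2, hx2⟩ := exists_blob_parts h1 h2 hβ hXV1 hXV2 hb
    rw [blob_eq h1 h2 hb1 hb2 hβ hb hxb hB1 hx1 hB2 hx2]
    rw [connected_induce_iff]
    have r1 := (connected_induce_iff.1 (hconn1 B1 hB1)).2
    have r2 := (connected_induce_iff.1 (hconn2 B2 hB2)).2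
    have anch : ∀ z ∈ B1 ∪ B2, ReachIn (G ⊔ cliqueOn X) (B1 ∪ B2) z x := by
      intro z hz
      rcases Finset.mem_union.1 hz with h | h
      · exact (r1 z h x hx1).mono hsup1 Finset.subset_union_left
      · exact (r2 z h x hx2).mono hsup2 Finset.subset_union_right
    exact ⟨⟨x, Finset.mem_union.2 (Or.inl hx1)⟩,
      fun u hu w hw => (anch u hu).trans (anch w hw).symm⟩

lemma union_inter_V1 (h1 : IsPartitionOn V1 π1) (h2 : IsPartitionOn V2 π2)
    (hmem : ∀ u : V, u ∈ V1 → u ∈ V2 → u ∈ X)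
    {B1 B2 b : Finset V} (hB1 : B1 ∈ π1) (hB2 : B2 ∈ π2)
    (e1 : B1 ∩ X = b) (e2 : B2 ∩ X = b) : (B1 ∪ B2) ∩ V1 = B1 := by
  apply Finset.Subset.antisymm
  · intro z hz
    have hzV1 := (Finset.mem_inter.1 hz).2
    rcases Finset.mem_union.1 (Finset.mem_inter.1 hz).1 with h | h
    · exact h
    · have hzX : z ∈ X := hmem z hzV1 (h2.2.1 B2 hB2 h)
      have : z ∈ b := e2 ▸ Finset.mem_inter.2 ⟨h, hzX⟩
      exact (Finset.mem_inter.1 (e1.symm ▸ this)).1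
  · intro z hz
    exact Finset.mem_inter.2 ⟨Finset.mem_union.2 (Or.inl hz), h1.2.1 B1 hB1 hz⟩

open scoped Classical in
lemma merged_trace1 (h1 : IsPartitionOn V1 π1) (h2 : IsPartitionOn V2 π2)
    (hb1 : restrictPart π1 X = β) (hb2 : restrictPart π2 X = β)
    (hβ : IsPartitionOn X β) (hXV1 : X ⊆ V1) (hXV2 : X ⊆ V2)
    (hmem : ∀ u : V, u ∈ V1 → u ∈ V2 → u ∈ X) :
    restrictPart (mergedPart π1 π2 β X) V1 = π1 := by
  ext C
  rw [mem_restrictPart]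
  constructor
  · rintro ⟨⟨D, hD, rfl⟩, hne⟩
    rcases mem_mergedPart.1 hD with ⟨hDp, hDX⟩ | ⟨hDp, hDX⟩ | ⟨b, hb, rfl⟩
    · rwa [Finset.inter_eq_left.2 (h1.2.1 D hDp)]
    · exfalso
      apply Finset.not_nonempty_empty
      have : D ∩ V1 = ∅ := by
        apply Finset.eq_empty_of_forall_notMem
        intro z hz
        have hzX : z ∈ X := hmem z (Finset.mem_inter.1 hz).2
          (h2.2.1 D hDp (Finset.mem_inter.1 hz).1)
        exact absurd (Finset.mem_inter.2 ⟨(Finset.mem_inter.1 hz).1, hzX⟩) (by simp [hDX])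
      rwa [this] at hne
    · obtain ⟨x, B1, B2, hxb, hB1, hx1, hB2, hx2⟩ := exists_blob_parts h1 h2 hβ hXV1 hXV2 hb
      rw [blob_eq h1 h2 hb1 hb2 hβ hb hxb hB1 hx1 hB2 hx2,
        union_inter_V1 h1 h2 hmem hB1 hB2 (trace_eq_b h1 hb1 hβ hB1 hb hx1 hxb)
          (trace_eq_b h2 hb2 hβ hB2 hb hx2 hxb)]
      exact hB1
  · intro hC
    by_cases hCX : C ∩ X = ∅
    · refine ⟨⟨C, mem_mergedPart.2 (Or.inl ⟨hC, hCX⟩),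
        (Finset.inter_eq_left.2 (h1.2.1 C hC)).symm⟩, ?_⟩
      exact part_block_nonempty h1 hC
    · obtain ⟨x, hx⟩ := Finset.nonempty_iff_ne_empty.2 hCX
      have hbmem : C ∩ X ∈ β := by
        rw [← hb1]
        exact mem_restrictPart.2 ⟨⟨C, hC, rfl⟩, ⟨x, hx⟩⟩
      have hxX := (Finset.mem_inter.1 hx).2
      obtain ⟨B2, hB2, hx2⟩ := part_exists h2 (hXV2 hxX)
      have hblob := blob_eq h1 h2 hb1 hb2 hβ hbmem hx hC (Finset.mem_inter.1 hx).1 hB2 hx2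
      have htr : ((π1 ∪ π2).filter (fun B => ∃ y ∈ C ∩ X, y ∈ B)).biUnion id ∩ V1 = C := by
        rw [hblob]
        exact union_inter_V1 h1 h2 hmem hC hB2 rfl
          (trace_eq_b h2 hb2 hβ hB2 hbmem hx2 hx)
      refine ⟨⟨_, mem_mergedPart.2 (Or.inr (Or.inr ⟨C ∩ X, hbmem, rfl⟩)), htr.symm⟩, ?_⟩
      exact part_block_nonempty h1 hC

open scoped Classical in
lemma merged_trace2 (h1 : IsPartitionOn V1 π1) (h2 : IsPartitionOn V2 π2)
    (hb1 : restrictPart π1 X = β) (hb2 : restrictPart π2 X = β)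
    (hβ : IsPartitionOn X β) (hXV1 : X ⊆ V1) (hXV2 : X ⊆ V2)
    (hmem : ∀ u : V, u ∈ V1 → u ∈ V2 → u ∈ X) :
    restrictPart (mergedPart π1 π2 β X) V2 = π2 := by
  rw [mergedPart_comm]
  exact merged_trace1 h2 h1 hb2 hb1 hβ hXV2 hXV1 (fun u ha hb => hmem u hb ha)

end Merge2

open scoped Classical in
/-- `T(H,β,γ;x)`: the sum of `x^{|π|}` over all connected set partitions `π` of the
graph `H_X` (on the vertex set `U`) with `π ⊓ X = β` and `{H[π]} ⊓ X = γ`. -/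
noncomputable def T (H : SimpleGraph V) (U X : Finset V)
    (β γ : Finset (Finset V)) (x : ℤ) : ℤ :=
  ∑ P ∈ Finset.univ.filter (fun P : Finset (Finset V) =>
      IsPartitionOn U P ∧
      (∀ B ∈ P, ((H ⊔ cliqueOn X).induce (B : Set V)).Connected) ∧
      restrictPart P X = β ∧ restrictPart (indPart H P) X = γ),
    x ^ P.card

open scoped Classical in
/-- Splitting formula for the `T`-polynomials: for a splitting `(G¹,G²,X)` of `G`
and partitions `β`, `γ` of `X`,
`x^{|β|}·T(G,β,γ;x) = Σ_{γ¹∨γ²=γ} T(G¹,β,γ¹;x)·T(G²,β,γ²;x)`. -/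
theorem splitting_T (G G1 G2 : SimpleGraph V) (V1 V2 X : Finset V)
    (hV : V1 ∪ V2 = Finset.univ) (hX : V1 ∩ V2 = X)
    (hG1V : ∀ u v : V, G1.Adj u v → u ∈ V1 ∧ v ∈ V1)
    (hG2V : ∀ u v : V, G2.Adj u v → u ∈ V2 ∧ v ∈ V2)
    (hE : ∀ u v : V, G.Adj u v ↔ (G1.Adj u v ∨ G2.Adj u v))
    (hEdisj : ∀ u v : V, ¬(G1.Adj u v ∧ G2.Adj u v))
    (β γ : Finset (Finset V))
    (hβ : IsPartitionOn X β) (hγ : IsPartitionOn X γ) (x : ℤ) :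
    x ^ β.card * T G Finset.univ X β γ x
      = ∑ p ∈ Finset.univ.filter
            (fun p : Finset (Finset V) × Finset (Finset V) =>
              IsPartitionOn X p.1 ∧ IsPartitionOn X p.2 ∧ IsJoin X p.1 p.2 γ),
          T G1 V1 X β p.1 x * T G2 V2 X β p.2 x := by
  classical
  have hXV1 : X ⊆ V1 := by rw [← hX]; exact Finset.inter_subset_left
  have hXV2 : X ⊆ V2 := by rw [← hX]; exact Finset.inter_subset_right
  have hmem : ∀ u : V, u ∈ V1 → u ∈ V2 → u ∈ X :=
    fun u h1 h2 => hX ▸ Finset.mem_inter.2 ⟨h1, h2⟩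
  have hcover : ∀ u : V, u ∈ V1 ∨ u ∈ V2 :=
    fun u => Finset.mem_union.1 (hV ▸ Finset.mem_univ u)
  have hle1 : G1 ≤ G := fun {u v} h => (hE u v).2 (Or.inl h)
  have hle2 : G2 ≤ G := fun {u v} h => (hE u v).2 (Or.inr h)
  have hE' : ∀ u v : V, G.Adj u v ↔ (G2.Adj u v ∨ G1.Adj u v) :=
    fun u v => (hE u v).trans or_comm
  have hmem' : ∀ u : V, u ∈ V2 → u ∈ V1 → u ∈ X := fun u h2 h1 => hmem u h1 h2
  -- the fiber map and the pair-set Q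
  set g : Finset (Finset V) × Finset (Finset V) → Finset (Finset V) × Finset (Finset V) :=
    fun q => (restrictPart (indPart G1 q.1) X, restrictPart (indPart G2 q.2) X) with hgdef
  set Q : Finset (Finset (Finset V) × Finset (Finset V)) :=
    Finset.univ.filter (fun q : Finset (Finset V) × Finset (Finset V) =>
      (IsPartitionOn V1 q.1 ∧
        (∀ B ∈ q.1, ((G1 ⊔ cliqueOn X).induce (B : Set V)).Connected) ∧
        restrictPart q.1 X = β) ∧
      (IsPartitionOn V2 q.2 ∧
        (∀ B ∈ q.2, ((G2 ⊔ cliqueOn X).induce (B : Set V)).Connected) ∧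
        restrictPart q.2 X = β) ∧
      IsJoin X (restrictPart (indPart G1 q.1) X) (restrictPart (indPart G2 q.2) X) γ)
    with hQdef
  have hmaps : ∀ q ∈ Q, g q ∈ Finset.univ.filter
      (fun p : Finset (Finset V) × Finset (Finset V) =>
        IsPartitionOn X p.1 ∧ IsPartitionOn X p.2 ∧ IsJoin X p.1 p.2 γ) := by
    intro q hq
    rw [hQdef, Finset.mem_filter] at hq
    obtain ⟨-, ⟨hq1, -, -⟩, ⟨hq2, -, -⟩, hJ⟩ := hq
    refine Finset.mem_filter.2 ⟨Finset.mem_univ _, ?_, ?_, hJ⟩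
    · exact restrictPart_isPartitionOn (indPart_isPartitionOn hq1) hXV1
    · exact restrictPart_isPartitionOn (indPart_isPartitionOn hq2) hXV2
  -- Step 1: rewrite the RHS as a single sum over Q
  have step2 : ∑ p ∈ Finset.univ.filter
      (fun p : Finset (Finset V) × Finset (Finset V) =>
        IsPartitionOn X p.1 ∧ IsPartitionOn X p.2 ∧ IsJoin X p.1 p.2 γ),
      T G1 V1 X β p.1 x * T G2 V2 X β p.2 x
      = ∑ q ∈ Q, x ^ q.1.card * x ^ q.2.card := by
    rw [← Finset.sum_fiberwise_of_maps_to hmaps (fun q => x ^ q.1.card * x ^ q.2.card)]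
    apply Finset.sum_congr rfl
    intro p hp
    rw [Finset.mem_filter] at hp
    obtain ⟨-, hp1, hp2, hpJ⟩ := hp
    rw [T, T, Finset.sum_mul_sum, ← Finset.sum_product']
    apply Finset.sum_congr _ (fun _ _ => rfl)
    ext q
    rw [Finset.mem_product, Finset.mem_filter, Finset.mem_filter, Finset.mem_filter]
    constructor
    · rintro ⟨⟨-, c1, c2, c3, c4⟩, ⟨-, d1, d2, d3, d4⟩⟩
      refine ⟨Finset.mem_filter.2 ⟨Finset.mem_univ _, ⟨c1, c2, c3⟩, ⟨d1, d2, d3⟩, ?_⟩, ?_⟩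
      · rw [c4, d4]; exact hpJ
      · rw [hgdef]
        exact Prod.ext c4 d4
    · rintro ⟨hqQ, hgq⟩
      rw [hQdef, Finset.mem_filter] at hqQ
      obtain ⟨-, ⟨c1, c2, c3⟩, ⟨d1, d2, d3⟩, -⟩ := hqQ
      have e1 : restrictPart (indPart G1 q.1) X = p.1 := congrArg Prod.fst hgq
      have e2 : restrictPart (indPart G2 q.2) X = p.2 := congrArg Prod.snd hgq
      exact ⟨⟨Finset.mem_univ _, c1, c2, c3, e1⟩, ⟨Finset.mem_univ _, d1, d2, d3, e2⟩⟩
  rw [step2, T, Finset.mul_sum]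
  -- Step 2: the weight-preserving bijection
  apply Finset.sum_nbij'
    (fun π => (restrictPart π V1, restrictPart π V2))
    (fun q => mergedPart q.1 q.2 β X)
  · -- maps into Q
    intro π hπmem
    rw [Finset.mem_filter] at hπmem
    obtain ⟨-, hπ, hconn, hbX, hγX⟩ := hπmem
    have conn1 : ∀ B ∈ restrictPart π V1,
        ((G1 ⊔ cliqueOn X).induce (B : Set V)).Connected := by
      intro B1 hB1
      rcases mem_restrictPart.1 hB1 with ⟨⟨B, hB, rfl⟩, hne⟩
      exact trace_connected hG1V hG2V hE hXV1 hmem (hconn B hB) hne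
    have conn2 : ∀ B ∈ restrictPart π V2,
        ((G2 ⊔ cliqueOn X).induce (B : Set V)).Connected := by
      intro B2 hB2
      rcases mem_restrictPart.1 hB2 with ⟨⟨B, hB, rfl⟩, hne⟩
      exact trace_connected hG2V hG1V hE' hXV2 hmem' (hconn B hB) hne
    refine Finset.mem_filter.2 ⟨Finset.mem_univ _,
      ⟨restrictPart_isPartitionOn hπ (Finset.subset_univ V1), conn1,
        by rw [restrictPart_restrictPart hXV1]; exact hbX⟩,
      ⟨restrictPart_isPartitionOn hπ (Finset.subset_univ V2), conn2,
        by rw [restrictPart_restrictPart hXV2]; exact hbX⟩, ?_⟩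
    have := isJoin_main hG1V hG2V hE hXV1 hXV2 hmem hπ
    rwa [hγX] at this
  · -- maps back into S
    intro q hq
    rw [hQdef, Finset.mem_filter] at hq
    obtain ⟨-, ⟨h1, conn1, hb1⟩, ⟨h2, conn2, hb2⟩, hJ⟩ := hq
    have hπM : IsPartitionOn Finset.univ (mergedPart q.1 q.2 β X) :=
      merged_isPartitionOn h1 h2 hb1 hb2 hβ hXV1 hXV2 hmem hcover
    have hconnM := merged_conn h1 h2 hb1 hb2 hβ hXV1 hXV2 hle1 hle2 conn1 conn2
    have htr1 := merged_trace1 h1 h2 hb1 hb2 hβ hXV1 hXV2 hmem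
    have htr2 := merged_trace2 h1 h2 hb1 hb2 hβ hXV1 hXV2 hmem
    have hbM : restrictPart (mergedPart q.1 q.2 β X) X = β := by
      rw [← restrictPart_restrictPart hXV1, htr1]; exact hb1
    have hγM : restrictPart (indPart G (mergedPart q.1 q.2 β X)) X = γ := by
      have hJM := isJoin_main hG1V hG2V hE hXV1 hXV2 hmem hπM
      rw [htr1, htr2] at hJM
      exact isJoin_unique
        (restrictPart_isPartitionOn (indPart_isPartitionOn hπM) (Finset.subset_univ X))
        hγ hJM hJ
    exact Finset.mem_filter.2 ⟨Finset.mem_univ _, hπM, hconnM, hbM, hγM⟩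
  · -- left inverse
    intro π hπmem
    rw [Finset.mem_filter] at hπmem
    obtain ⟨-, hπ, hconn, hbX, hγX⟩ := hπmem
    have h1 : IsPartitionOn V1 (restrictPart π V1) :=
      restrictPart_isPartitionOn hπ (Finset.subset_univ V1)
    have h2 : IsPartitionOn V2 (restrictPart π V2) :=
      restrictPart_isPartitionOn hπ (Finset.subset_univ V2)
    have hb1 : restrictPart (restrictPart π V1) X = β := by
      rw [restrictPart_restrictPart hXV1]; exact hbX
    have hb2 : restrictPart (restrictPart π V2) X = β := by
      rw [restrictPart_restrictPart hXV2]; exact hbX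
    have conn1 : ∀ B ∈ restrictPart π V1,
        ((G1 ⊔ cliqueOn X).induce (B : Set V)).Connected := by
      intro B1 hB1
      rcases mem_restrictPart.1 hB1 with ⟨⟨B, hB, rfl⟩, hne⟩
      exact trace_connected hG1V hG2V hE hXV1 hmem (hconn B hB) hne
    have conn2 : ∀ B ∈ restrictPart π V2,
        ((G2 ⊔ cliqueOn X).induce (B : Set V)).Connected := by
      intro B2 hB2
      rcases mem_restrictPart.1 hB2 with ⟨⟨B, hB, rfl⟩, hne⟩
      exact trace_connected hG2V hG1V hE' hXV2 hmem' (hconn B hB) hne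
    have hπM : IsPartitionOn Finset.univ
        (mergedPart (restrictPart π V1) (restrictPart π V2) β X) :=
      merged_isPartitionOn h1 h2 hb1 hb2 hβ hXV1 hXV2 hmem hcover
    have hconnM := merged_conn h1 h2 hb1 hb2 hβ hXV1 hXV2 hle1 hle2 conn1 conn2
    exact phi_inj hG1V hG2V hE hXV1 hXV2 hmem hcover hπM hconnM hπ hconn
      (merged_trace1 h1 h2 hb1 hb2 hβ hXV1 hXV2 hmem)
      (merged_trace2 h1 h2 hb1 hb2 hβ hXV1 hXV2 hmem)
  · -- right inverse
    intro q hq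
    rw [hQdef, Finset.mem_filter] at hq
    obtain ⟨-, ⟨h1, conn1, hb1⟩, ⟨h2, conn2, hb2⟩, hJ⟩ := hq
    exact Prod.ext (merged_trace1 h1 h2 hb1 hb2 hβ hXV1 hXV2 hmem)
      (merged_trace2 h1 h2 hb1 hb2 hβ hXV1 hXV2 hmem)
  · -- weights
    intro π hπmem
    rw [Finset.mem_filter] at hπmem
    obtain ⟨-, hπ, hconn, hbX, hγX⟩ := hπmem
    rw [← pow_add, ← pow_add]
    congr 1
    rw [← hbX]
    exact (card_split hG1V hG2V hE hXV1 hXV2 hmem hcover hπ hconn).symm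
end
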